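/- There is a constant C ≥ 1 depending only on d and M such that for all x, y ∈ [0,1]^d with x = Π(𝚒), y = Π(𝚓), the following holds: let 𝚔 = 𝚒 ∧ 𝚓 be the longest common prefix, let 0 ≤ n ≤ |𝚔| be the largest index such that 𝚔|_n ∈ T_n(ω), and write 𝚒 = 𝚔|_n 𝚒', 𝚓 = 𝚔|_n 𝚓'. Then C^{-1} M^{n−|(𝚔|_n)~|}|x−y| ≤ |f(x)−f(y)| ≤ C M^{n−|(𝚔|_n)~|}|x−y|, where f is the extended map on [0,1]^d; moreover M^{−|(𝚔|_n)~|}|Π(𝚒')−Π(𝚓')| = M^{n−|(𝚔|_n)~|}|x−y|. -/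

import Mathlib

open MeasureTheory ProbabilityTheory Set Filter
open scoped ENNReal NNReal Topology Classical

noncomputable section

namespace FractalPercolation

/-! ### Words -/

/-- The finite word `𝚒|_n` obtained by truncating an infinite word. -/
def wordTake (d M : ℕ) (i : ℕ → Fin (M ^ d)) (n : ℕ) : List (Fin (M ^ d)) :=
  List.ofFn fun k : Fin n => i k

/-- The shift `σ^n 𝚒` of an infinite word. -/
def shiftW (d M : ℕ) (n : ℕ) (i : ℕ → Fin (M ^ d)) : ℕ → Fin (M ^ d) := fun t => i (n + t)

/-- The concatenation `𝚠𝚖` of a finite word with an infinite word. -/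
def extendW (d M : ℕ) (w : List (Fin (M ^ d))) (m : ℕ → Fin (M ^ d)) : ℕ → Fin (M ^ d) :=
  fun t => if h : t < w.length then w.get ⟨t, h⟩ else m (t - w.length)

/-! ### Geometry: cubes and the natural projection -/

/-- Lower-left corner of the `M`-adic cube labelled by the finite word `w`; the labelling
`lab` sends a symbol to the vector of integer offsets (in `{0,…,M-1}^d`) of the corresponding
subcube. -/
def corner (d M : ℕ) (lab : Fin (M ^ d) → Fin d → Fin M) :
    List (Fin (M ^ d)) → Fin d → ℝ
  | [] => fun _ => 0
  | i :: w => fun k => ((lab i k : ℝ) + corner d M lab w k) / (M : ℝ)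

/-- The closed `M`-adic cube `Q_𝚠 ⊆ [0,1]^d` labelled by the finite word `w`. -/
def cube (d M : ℕ) (lab : Fin (M ^ d) → Fin d → Fin M) (w : List (Fin (M ^ d))) :
    Set (Fin d → ℝ) :=
  {x | ∀ k, corner d M lab w k ≤ x k ∧ x k ≤ corner d M lab w k + ((M : ℝ) ^ w.length)⁻¹}

/-- The homothety `h_{Q_𝚠}` sending `[0,1]^d` onto `Q_𝚠`. -/
def hQ (d M : ℕ) (lab : Fin (M ^ d) → Fin d → Fin M) (w : List (Fin (M ^ d)))
    (y : Fin d → ℝ) : Fin d → ℝ :=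
  fun k => corner d M lab w k + ((M : ℝ) ^ w.length)⁻¹ * y k

/-- The natural projection `Π : Λ^ℕ → [0,1]^d`, `{Π(𝚒)} = ⋂_n Q_{𝚒|_n}`. -/
def PiInf (d M : ℕ) (lab : Fin (M ^ d) → Fin d → Fin M) (i : ℕ → Fin (M ^ d)) :
    Fin d → ℝ :=
  fun k => ⨆ n, corner d M lab (wordTake d M i n) k

/-- The cube concentric with the cube of lower-left corner `c` and side length `ℓ`,
with side length `κ·ℓ`. -/
def concCube (d : ℕ) (c : Fin d → ℝ) (ℓ κ : ℝ) : Set (Fin d → ℝ) :=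
  {x | ∀ k, c k + (1 - κ) * ℓ / 2 ≤ x k ∧ x k ≤ c k + (1 + κ) * ℓ / 2}

/-! ### The labelling -/

/-- The set `Λ_B` of labels of subcubes meeting the boundary. -/
def LamB (d M : ℕ) : Set (Fin (M ^ d)) := {i | (i : ℕ) < M ^ d - (M - 2) ^ d}

/-- `lab` is a genuine labelling of the `M^d` subcubes such that the symbols in `Λ_B`
are exactly those of subcubes meeting the boundary of `[0,1]^d`. -/
def LabSpec (d M : ℕ) (lab : Fin (M ^ d) → Fin d → Fin M) : Prop :=
  Function.Bijective lab ∧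
    ∀ i, i ∈ LamB d M ↔ ∃ k, (lab i k : ℕ) = 0 ∨ (lab i k : ℕ) = M - 1

/-! ### The percolation process -/

/-- The finite word `w` survives (i.e. `w ∈ T_{|w|}(ω)`): all its nonempty prefixes
are retained. -/
def Alive (d M : ℕ) {Ω : Type*} (X : List (Fin (M ^ d)) → Ω → Bool) (ω : Ω)
    (w : List (Fin (M ^ d))) : Prop :=
  ∀ u : List (Fin (M ^ d)), u ≠ [] → u <+: w → X u ω = true

/-- The infinite word `𝚒` survives, i.e. `𝚒 ∈ T(ω)`. -/
def TInf (d M : ℕ) {Ω : Type*} (X : List (Fin (M ^ d)) → Ω → Bool) (ω : Ω)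
    (i : ℕ → Fin (M ^ d)) : Prop :=
  ∀ n, Alive d M X ω (wordTake d M i n)

/-- The fractal percolation set `E(ω) = Π(T(ω))`. -/
def Eset (d M : ℕ) (lab : Fin (M ^ d) → Fin d → Fin M) {Ω : Type*}
    (X : List (Fin (M ^ d)) → Ω → Bool) (ω : Ω) : Set (Fin d → ℝ) :=
  {x | ∃ i, TInf d M X ω i ∧ PiInf d M lab i = x}

/-- `(X_𝚒)_{𝚒∈Λ^*}` are i.i.d. Bernoulli(p) random variables under `P`. -/
def PercSpec (d M : ℕ) {Ω : Type*} [MeasurableSpace Ω] (P : Measure Ω)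
    (X : List (Fin (M ^ d)) → Ω → Bool) (p : ℝ) : Prop :=
  (∀ w, Measurable (X w)) ∧
    iIndepFun X P ∧
    ∀ w, P {ω | X w ω = true} = ENNReal.ofReal p

/-- The σ-algebra `𝓑_n` generated by `{X_𝚒 : |𝚒| ≤ n}`. -/
def Bsig (d M : ℕ) {Ω : Type*} (X : List (Fin (M ^ d)) → Ω → Bool) (n : ℕ) :
    MeasurableSpace Ω :=
  ⨆ w ∈ {w : List (Fin (M ^ d)) | w.length ≤ n}, MeasurableSpace.comap (X w) ⊤

/-! ### The substitution map -/

/-- All subcubes of `Q_𝚠` meeting the boundary of `Q_𝚠` die at the next step. -/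
def BdryDead (d M : ℕ) {Ω : Type*} (X : List (Fin (M ^ d)) → Ω → Bool) (ω : Ω)
    (w : List (Fin (M ^ d))) : Prop :=
  ∀ j ∈ LamB d M, ¬ Alive d M X ω (w ++ [j])

/-- Auxiliary recursion for the substitution `𝚒 ↦ 𝚒̃`: `pfx` is the already processed
prefix of the original word. -/
def substAux (d M : ℕ) {Ω : Type*} (X : List (Fin (M ^ d)) → Ω → Bool)
    (e : List (Fin (M ^ d))) (ω : Ω) :
    List (Fin (M ^ d)) → List (Fin (M ^ d)) → List (Fin (M ^ d))
  | _, [] => []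
  | pfx, i :: rest =>
      (if BdryDead d M X ω pfx then e ++ [i] else [i]) ++
        substAux d M X e ω (pfx ++ [i]) rest

/-- The substitution `𝚠 ↦ 𝚠̃` (with substitution word `e = η`) applied to a finite word. -/
def substW (d M : ℕ) {Ω : Type*} (X : List (Fin (M ^ d)) → Ω → Bool)
    (e : List (Fin (M ^ d))) (ω : Ω) (w : List (Fin (M ^ d))) : List (Fin (M ^ d)) :=
  substAux d M X e ω ([]) w

/-- The point `Π(𝚒̃)` for an infinite word `𝚒`. -/
def PiTilde (d M : ℕ) (lab : Fin (M ^ d) → Fin d → Fin M) {Ω : Type*}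
    (X : List (Fin (M ^ d)) → Ω → Bool) (e : List (Fin (M ^ d))) (ω : Ω)
    (i : ℕ → Fin (M ^ d)) : Fin d → ℝ :=
  fun k => ⨆ n, corner d M lab (substW d M X e ω (wordTake d M i n)) k

/-- The image `F(ω) = f(E(ω))` of the substitution map. -/
def Fset (d M : ℕ) (lab : Fin (M ^ d) → Fin d → Fin M) {Ω : Type*}
    (X : List (Fin (M ^ d)) → Ω → Bool) (e : List (Fin (M ^ d))) (ω : Ω) :
    Set (Fin d → ℝ) :=
  {x | ∃ i, TInf d M X ω i ∧ PiTilde d M lab X e ω i = x}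

/-- The substitution word `e = η ∈ Λ^K` has length `K ≥ 1` and its first symbol labels
an inner cube. -/
def EtaSpec (d M K : ℕ) (e : List (Fin (M ^ d))) : Prop :=
  1 ≤ K ∧ e.length = K ∧ ∃ a l, e = a :: l ∧ a ∉ LamB d M

/-- `diam Q_𝚠 = M^{-|𝚠|}` (in the max-norm). -/
def diamQ (d M : ℕ) (w : List (Fin (M ^ d))) : ℝ := ((M : ℝ) ^ w.length)⁻¹

/-- The quantity `κ(s,K)` from the paper. -/
def kappa (d M : ℕ) (p : ℝ) (K : ℕ) (s : ℝ) : ℝ :=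
  1 - (((M : ℝ) - 2) ^ d / (M : ℝ) ^ d) * (1 - (M : ℝ) ^ (-(s * (K : ℝ)))) *
      (1 - p) ^ (M ^ d - (M - 2) ^ d)

/-- The quantity `κ' = lim_{K→∞} κ(s,K)` from the paper. -/
def kappa' (d M : ℕ) (p : ℝ) : ℝ :=
  1 - (((M : ℝ) - 2) ^ d / (M : ℝ) ^ d) * (1 - p) ^ (M ^ d - (M - 2) ^ d)

/-- The random sums `Y^t_n(ω) = Σ_{𝚒∈T_n(ω)} diam(Q_{𝚒̃})^t`. -/
def Yt (d M : ℕ) {Ω : Type*} (X : List (Fin (M ^ d)) → Ω → Bool)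
    (e : List (Fin (M ^ d))) (t : ℝ) (n : ℕ) (ω : Ω) : ℝ :=
  ∑ v : Fin n → Fin (M ^ d),
    if Alive d M X ω (List.ofFn v) then (diamQ d M (substW d M X e ω (List.ofFn v))) ^ t
    else 0

/-! ### Quasisymmetric maps -/

/-- `f` satisfies the quasisymmetry estimate with control function `η`. -/
def IsQSWith {α β : Type*} [PseudoMetricSpace α] [PseudoMetricSpace β]
    (η : ℝ≥0 → ℝ≥0) (f : α → β) : Prop :=
  ∀ x y z : α, x ≠ z →
    nndist (f x) (f y) / nndist (f x) (f z) ≤ η (nndist x y / nndist x z)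

/-- A homeomorphism is quasisymmetric if it admits a control function which is a
homeomorphism of `[0,∞)`. -/
def IsQSHomeo {α β : Type*} [MetricSpace α] [MetricSpace β] (f : α ≃ₜ β) : Prop :=
  ∃ η : ℝ≥0 ≃ₜ ℝ≥0, IsQSWith (⇑η) (⇑f)

/-! ### The auxiliary map g and the extension of f -/

/-- `g : [0,1]^d → [0,1]^d` is an `L`-bi-Lipschitz bijection of the unit cube, equal to the
identity on the boundary, mapping `I = (1-2/M)[0,1]^d` homothetically onto `(1-2/M)Q_η`. -/
def GSpec (d M K : ℕ) (lab : Fin (M ^ d) → Fin d → Fin M) (e : List (Fin (M ^ d)))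
    (L : ℝ) (g : (Fin d → ℝ) → (Fin d → ℝ)) : Prop :=
  Set.BijOn g (cube d M lab ([])) (cube d M lab ([])) ∧
    (∀ x ∈ cube d M lab ([]), ∀ y ∈ cube d M lab ([]),
      L⁻¹ * dist x y ≤ dist (g x) (g y) ∧ dist (g x) (g y) ≤ L * dist x y) ∧
    (∀ x ∈ frontier (cube d M lab ([] : List (Fin (M ^ d)))), g x = x) ∧
    (∃ v : Fin d → ℝ,
      ∀ x ∈ concCube d (fun _ => (0 : ℝ)) 1 (1 - 2 / (M : ℝ)),
        g x = ((M : ℝ) ^ K)⁻¹ • x + v) ∧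
    g '' concCube d (fun _ => (0 : ℝ)) 1 (1 - 2 / (M : ℝ)) =
      concCube d (corner d M lab e) (((M : ℝ) ^ K)⁻¹) (1 - 2 / (M : ℝ))

/-- `F` is (the coding of) the extension of the substitution map to `[0,1]^d`:
on surviving words it is the substitution map, and on a word whose largest surviving
prefix is `𝚒|_n` it is given by the two cases of the definition in the paper. -/
def ExtMapSpec (d M : ℕ) (lab : Fin (M ^ d) → Fin d → Fin M) {Ω : Type*}
    (X : List (Fin (M ^ d)) → Ω → Bool) (e : List (Fin (M ^ d)))
    (g : (Fin d → ℝ) → (Fin d → ℝ)) (ω : Ω)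
    (F : (ℕ → Fin (M ^ d)) → (Fin d → ℝ)) : Prop :=
  (∀ i, TInf d M X ω i → F i = PiTilde d M lab X e ω i) ∧
    ∀ (i : ℕ → Fin (M ^ d)) (n : ℕ),
      Alive d M X ω (wordTake d M i n) → ¬ Alive d M X ω (wordTake d M i (n + 1)) →
        ((∃ j ∈ LamB d M, Alive d M X ω (wordTake d M i n ++ [j])) →
          F i = hQ d M lab (substW d M X e ω (wordTake d M i n))
              (PiInf d M lab (shiftW d M n i))) ∧
        ((∀ j ∈ LamB d M, ¬ Alive d M X ω (wordTake d M i n ++ [j])) →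
          F i = hQ d M lab (substW d M X e ω (wordTake d M i n))
              (g (PiInf d M lab (shiftW d M n i))))

/-! ### Auxiliary lemmas -/

section AuxWords

variable {d M : ℕ}

lemma wordTake_length (i : ℕ → Fin (M ^ d)) (n : ℕ) : (wordTake d M i n).length = n :=
  List.length_ofFn

lemma wordTake_zero (i : ℕ → Fin (M ^ d)) : wordTake d M i 0 = [] := rfl

lemma wordTake_succ (i : ℕ → Fin (M ^ d)) (n : ℕ) :
    wordTake d M i (n + 1) = wordTake d M i n ++ [i n] := by
  unfold wordTake
  rw [List.ofFn_succ']
  simp [List.concat_eq_append]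

lemma wordTake_one (i : ℕ → Fin (M ^ d)) : wordTake d M i 1 = [i 0] := by
  rw [show (1:ℕ) = 0 + 1 from rfl, wordTake_succ, wordTake_zero]; rfl

lemma shiftW_shiftW (n t : ℕ) (i : ℕ → Fin (M ^ d)) :
    shiftW d M t (shiftW d M n i) = shiftW d M (n + t) i := by
  funext s; simp [shiftW, Nat.add_assoc]

lemma shiftW_zero (i : ℕ → Fin (M ^ d)) : shiftW d M 0 i = i := by
  funext s; simp [shiftW]

lemma wordTake_add (i : ℕ → Fin (M ^ d)) (n t : ℕ) :
    wordTake d M i (n + t) = wordTake d M i n ++ wordTake d M (shiftW d M n i) t := by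
  induction t with
  | zero => simp [wordTake_zero]
  | succ t ih =>
      rw [show n + (t+1) = (n + t) + 1 from rfl, wordTake_succ, ih, wordTake_succ,
        List.append_assoc]
      rfl

lemma wordTake_prefix (i : ℕ → Fin (M ^ d)) {n m : ℕ} (h : n ≤ m) :
    wordTake d M i n <+: wordTake d M i m := by
  obtain ⟨t, rfl⟩ := Nat.exists_eq_add_of_le h
  rw [wordTake_add]; exact List.prefix_append _ _

lemma wordTake_eq_of_le {i j : ℕ → Fin (M ^ d)} {m : ℕ}
    (h : wordTake d M i m = wordTake d M j m) {n : ℕ} (hn : n ≤ m) :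
    wordTake d M i n = wordTake d M j n := by
  have h' : (fun k : Fin m => i k) = fun k : Fin m => j k := List.ofFn_injective h
  unfold wordTake
  congr 1
  funext k
  exact congrFun h' ⟨k, lt_of_lt_of_le k.2 hn⟩

lemma prefix_wordTake {i : ℕ → Fin (M ^ d)} {n : ℕ} {u : List (Fin (M ^ d))}
    (h : u <+: wordTake d M i n) : u = wordTake d M i u.length := by
  have hl : u.length ≤ n := by
    have := h.length_le; rwa [wordTake_length] at this
  have h2 := wordTake_prefix i hl
  exact (List.prefix_of_prefix_length_le h h2 (by rw [wordTake_length])).eq_of_length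
    (by rw [wordTake_length])

end AuxWords

section AuxGeom

variable {d M : ℕ} {lab : Fin (M ^ d) → Fin d → Fin M}

lemma Mr_pos (hM : 3 ≤ M) : (0:ℝ) < (M:ℝ) := by
  have : (0:ℕ) < M := by omega
  exact_mod_cast this

lemma corner_nil (k : Fin d) : corner d M lab ([] : List (Fin (M ^ d))) k = 0 := rfl

lemma corner_cons (a : Fin (M ^ d)) (w : List (Fin (M ^ d))) (k : Fin d) :
    corner d M lab (a :: w) k = ((lab a k : ℝ) + corner d M lab w k) / M := rfl

lemma corner_nonneg (hM : 3 ≤ M) (w : List (Fin (M ^ d))) (k : Fin d) :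
    0 ≤ corner d M lab w k := by
  induction w with
  | nil => exact (corner_nil k).ge
  | cons a w ih =>
      rw [corner_cons]
      exact div_nonneg (add_nonneg (Nat.cast_nonneg _) ih) (Mr_pos hM).le

lemma corner_add_le_one (hM : 3 ≤ M) (w : List (Fin (M ^ d))) (k : Fin d) :
    corner d M lab w k + ((M : ℝ) ^ w.length)⁻¹ ≤ 1 := by
  have hMp := Mr_pos hM
  induction w with
  | nil => simp [corner_nil]
  | cons a w ih =>
      have hlab : (lab a k : ℝ) ≤ (M : ℝ) - 1 := by
        have : (lab a k : ℕ) < M := (lab a k).2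
        have : (lab a k : ℕ) + 1 ≤ M := this
        have := (Nat.cast_le (α := ℝ)).mpr this
        push_cast at this
        linarith
      rw [corner_cons, List.length_cons]
      have hpow : (0:ℝ) < (M : ℝ) ^ w.length := by positivity
      have key : ((lab a k : ℝ) + corner d M lab w k) / M + ((M:ℝ) ^ (w.length + 1))⁻¹
          = ((lab a k : ℝ) + corner d M lab w k + ((M:ℝ) ^ w.length)⁻¹) / M := by
        rw [pow_succ]
        field_simp
      rw [key, div_le_one hMp]
      linarith

lemma corner_le_one (hM : 3 ≤ M) (w : List (Fin (M ^ d))) (k : Fin d) :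
    corner d M lab w k ≤ 1 := by
  have h := corner_add_le_one (lab := lab) hM w k
  have : (0:ℝ) < ((M : ℝ) ^ w.length)⁻¹ := by
    have := Mr_pos hM; positivity
  linarith

lemma corner_append (hM : 3 ≤ M) (u w : List (Fin (M ^ d))) (k : Fin d) :
    corner d M lab (u ++ w) k = corner d M lab u k + ((M : ℝ) ^ u.length)⁻¹ * corner d M lab w k := by
  have hMp := Mr_pos hM
  induction u with
  | nil => simp [corner_nil]
  | cons a u ih =>
      rw [List.cons_append, corner_cons, corner_cons, ih, List.length_cons, pow_succ]
      have hpow : (0:ℝ) < (M : ℝ) ^ u.length := by positivity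
      field_simp
      ring

lemma mem_cube_iff {w : List (Fin (M ^ d))} {x : Fin d → ℝ} :
    x ∈ cube d M lab w ↔ ∀ k, corner d M lab w k ≤ x k ∧
      x k ≤ corner d M lab w k + ((M : ℝ) ^ w.length)⁻¹ := Iff.rfl

lemma cube_append_subset (hM : 3 ≤ M) (u v : List (Fin (M ^ d))) :
    cube d M lab (u ++ v) ⊆ cube d M lab u := by
  intro x hx k
  have hMp := Mr_pos hM
  have h := hx k
  rw [corner_append hM] at h
  have hpu : (0:ℝ) < ((M : ℝ) ^ u.length)⁻¹ := by positivity
  have hcv := corner_nonneg (lab := lab) hM v k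
  have hcv1 := corner_add_le_one (lab := lab) hM v k
  constructor
  · nlinarith [h.1]
  · have : x k ≤ corner d M lab u k + ((M : ℝ) ^ u.length)⁻¹ *
        (corner d M lab v k + ((M : ℝ) ^ v.length)⁻¹) := by
      rw [List.length_append, pow_add, mul_inv] at h
      nlinarith [h.2]
    nlinarith

lemma cube_prefix (hM : 3 ≤ M) {u w : List (Fin (M ^ d))} (h : u <+: w) :
    cube d M lab w ⊆ cube d M lab u := by
  obtain ⟨v, rfl⟩ := h
  exact cube_append_subset hM u v

lemma cube_dist_le (hM : 3 ≤ M) {w : List (Fin (M ^ d))} {x y : Fin d → ℝ}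
    (hx : x ∈ cube d M lab w) (hy : y ∈ cube d M lab w) :
    dist x y ≤ ((M : ℝ) ^ w.length)⁻¹ := by
  have hMp := Mr_pos hM
  rw [dist_pi_le_iff (by positivity)]
  intro k
  rw [Real.dist_eq, abs_le]
  have h1 := hx k; have h2 := hy k
  constructor <;> linarith [h1.1, h1.2, h2.1, h2.2]

lemma hQ_nil (y : Fin d → ℝ) : hQ d M lab ([] : List (Fin (M ^ d))) y = y := by
  funext k; simp [hQ, corner_nil]

lemma hQ_append (hM : 3 ≤ M) (u v : List (Fin (M ^ d))) (y : Fin d → ℝ) :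
    hQ d M lab (u ++ v) y = hQ d M lab u (hQ d M lab v y) := by
  have hMp := Mr_pos hM
  funext k
  simp only [hQ, corner_append hM, List.length_append, pow_add, mul_inv]
  ring

lemma hQ_mem (hM : 3 ≤ M) {y : Fin d → ℝ} (hy : y ∈ cube d M lab ([] : List (Fin (M ^ d))))
    (w : List (Fin (M ^ d))) : hQ d M lab w y ∈ cube d M lab w := by
  intro k
  have hMp := Mr_pos hM
  have h := hy k
  rw [corner_nil, List.length_nil, pow_zero, inv_one, zero_add] at h
  have hpw : (0:ℝ) < ((M : ℝ) ^ w.length)⁻¹ := by positivity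
  simp only [hQ]
  constructor
  · nlinarith [h.1]
  · nlinarith [h.2]

lemma dist_hQ (hM : 3 ≤ M) (w : List (Fin (M ^ d))) (a b : Fin d → ℝ) :
    dist (hQ d M lab w a) (hQ d M lab w b) = ((M : ℝ) ^ w.length)⁻¹ * dist a b := by
  have hMp := Mr_pos hM
  have hrw : ∀ y : Fin d → ℝ, hQ d M lab w y =
      (fun k => corner d M lab w k) + ((M : ℝ) ^ w.length)⁻¹ • y := by
    intro y; funext k; simp [hQ, smul_eq_mul]
  rw [hrw, hrw, dist_add_left, dist_smul₀, Real.norm_eq_abs, abs_of_nonneg (by positivity)]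

/-- Inverse of the homothety `hQ`. -/
def hQinv (d M : ℕ) (lab : Fin (M ^ d) → Fin d → Fin M) (u : List (Fin (M ^ d)))
    (x : Fin d → ℝ) : Fin d → ℝ :=
  fun k => (M : ℝ) ^ u.length * (x k - corner d M lab u k)

lemma hQinv_hQ (hM : 3 ≤ M) (u : List (Fin (M ^ d))) (y : Fin d → ℝ) :
    hQinv d M lab u (hQ d M lab u y) = y := by
  have hMp := Mr_pos hM
  funext k
  have hpw : (0:ℝ) < (M : ℝ) ^ u.length := by positivity
  simp only [hQinv, hQ]
  field_simp
  ring

lemma hQ_hQinv (hM : 3 ≤ M) (u : List (Fin (M ^ d))) (x : Fin d → ℝ) :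
    hQ d M lab u (hQinv d M lab u x) = x := by
  have hMp := Mr_pos hM
  funext k
  have hpw : (0:ℝ) < (M : ℝ) ^ u.length := by positivity
  simp only [hQinv, hQ]
  field_simp
  ring

lemma affine_le_iff {P : ℝ} (hP : 0 < P) (a b c : ℝ) :
    a + P⁻¹ * b ≤ c ↔ b ≤ P * (c - a) := by
  constructor
  · intro h
    have h2 : P⁻¹ * b ≤ c - a := by linarith
    calc b = P * (P⁻¹ * b) := by field_simp
    _ ≤ P * (c - a) := mul_le_mul_of_nonneg_left h2 hP.le
  · intro h
    have h2 : P⁻¹ * b ≤ P⁻¹ * (P * (c - a)) :=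
      mul_le_mul_of_nonneg_left h (inv_nonneg.mpr hP.le)
    rw [← mul_assoc, inv_mul_cancel₀ hP.ne', one_mul] at h2
    linarith

lemma affine_le_iff' {P : ℝ} (hP : 0 < P) (a b c : ℝ) :
    c ≤ a + P⁻¹ * b ↔ P * (c - a) ≤ b := by
  constructor
  · intro h
    have h2 : c - a ≤ P⁻¹ * b := by linarith
    calc P * (c - a) ≤ P * (P⁻¹ * b) := mul_le_mul_of_nonneg_left h2 hP.le
    _ = b := by field_simp
  · intro h
    have h2 : P⁻¹ * (P * (c - a)) ≤ P⁻¹ * b :=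
      mul_le_mul_of_nonneg_left h (inv_nonneg.mpr hP.le)
    rw [← mul_assoc, inv_mul_cancel₀ hP.ne', one_mul] at h2
    linarith

lemma mem_cube_append_iff (hM : 3 ≤ M) {u v : List (Fin (M ^ d))} {x : Fin d → ℝ} :
    x ∈ cube d M lab (u ++ v) ↔ hQinv d M lab u x ∈ cube d M lab v := by
  have hMp := Mr_pos hM
  have hpu : (0:ℝ) < (M : ℝ) ^ u.length := by positivity
  constructor
  · intro hx k
    have h := hx k
    rw [corner_append hM, List.length_append, pow_add, mul_inv] at h
    simp only [hQinv]
    constructor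
    · exact (affine_le_iff hpu _ _ _).mp h.1
    · have h2 := h.2
      rw [add_assoc, ← mul_add] at h2
      exact (affine_le_iff' hpu _ _ _).mp h2
  · intro hx k
    have h := hx k
    simp only [hQinv] at h
    rw [corner_append hM, List.length_append, pow_add, mul_inv]
    constructor
    · exact (affine_le_iff hpu _ _ _).mpr h.1
    · rw [add_assoc, ← mul_add]
      exact (affine_le_iff' hpu _ _ _).mpr h.2

end AuxGeom

section AuxSup

variable {d M : ℕ} {lab : Fin (M ^ d) → Fin d → Fin M}

lemma corner_mono_of_prefix (hM : 3 ≤ M) {u w : List (Fin (M ^ d))} (h : u <+: w) (k : Fin d) :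
    corner d M lab u k ≤ corner d M lab w k := by
  obtain ⟨v, rfl⟩ := h
  rw [corner_append hM]
  have hMp := Mr_pos hM
  have h1 : (0:ℝ) ≤ ((M : ℝ) ^ u.length)⁻¹ := by positivity
  nlinarith [corner_nonneg (lab := lab) hM v k]

lemma bddAbove_corner_chain (hM : 3 ≤ M) (W : ℕ → List (Fin (M ^ d))) (k : Fin d) :
    BddAbove (Set.range fun t => corner d M lab (W t) k) := by
  refine ⟨1, ?_⟩
  rintro x ⟨t, rfl⟩
  exact corner_le_one hM _ k

lemma tendsto_corner_chain (hM : 3 ≤ M) {W : ℕ → List (Fin (M ^ d))}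
    (hW : ∀ s t, s ≤ t → W s <+: W t) (k : Fin d) :
    Filter.Tendsto (fun t => corner d M lab (W t) k) Filter.atTop
      (nhds (⨆ t, corner d M lab (W t) k)) :=
  tendsto_atTop_ciSup (fun s t hst => corner_mono_of_prefix hM (hW s t hst) k)
    (bddAbove_corner_chain hM W k)

lemma mem_cube_ciSup (hM : 3 ≤ M) {W : ℕ → List (Fin (M ^ d))}
    (hW : ∀ s t, s ≤ t → W s <+: W t) (n : ℕ) :
    (fun k => ⨆ t, corner d M lab (W t) k) ∈ cube d M lab (W n) := by
  intro k
  constructor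
  · exact le_ciSup (bddAbove_corner_chain hM W k) n
  · apply ciSup_le
    intro t
    rcases le_total t n with h | h
    · have h1 := corner_mono_of_prefix (lab := lab) hM (hW t n h) k
      have hMp := Mr_pos hM
      have : (0:ℝ) ≤ ((M : ℝ) ^ (W n).length)⁻¹ := by positivity
      linarith
    · obtain ⟨v, hv⟩ := hW n t h
      rw [← hv, corner_append hM]
      have hMp := Mr_pos hM
      have h2 : (0:ℝ) ≤ ((M : ℝ) ^ (W n).length)⁻¹ := by positivity
      nlinarith [corner_le_one (lab := lab) hM v k]

lemma ciSup_corner_factor (hM : 3 ≤ M) {W : ℕ → List (Fin (M ^ d))}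
    (hW : ∀ s t, s ≤ t → W s <+: W t) {u : List (Fin (M ^ d))} {W' : ℕ → List (Fin (M ^ d))}
    (hW' : ∀ s t, s ≤ t → W' s <+: W' t) (m : ℕ) (h : ∀ t, W (m + t) = u ++ W' t) (k : Fin d) :
    ⨆ t, corner d M lab (W t) k =
      corner d M lab u k + ((M : ℝ) ^ u.length)⁻¹ * ⨆ t, corner d M lab (W' t) k := by
  have h1 := tendsto_corner_chain (lab := lab) hM hW k
  have h2 := tendsto_corner_chain (lab := lab) hM hW' k
  have h3 : Filter.Tendsto (fun t => corner d M lab (W (m + t)) k) Filter.atTop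
      (nhds (⨆ t, corner d M lab (W t) k)) := by
    have := h1.comp (Filter.tendsto_add_atTop_nat m)
    simpa [Function.comp_def, Nat.add_comm] using this
  have h4 : Filter.Tendsto
      (fun t => corner d M lab u k + ((M : ℝ) ^ u.length)⁻¹ * corner d M lab (W' t) k)
      Filter.atTop
      (nhds (corner d M lab u k + ((M : ℝ) ^ u.length)⁻¹ * ⨆ t, corner d M lab (W' t) k)) :=
    ((h2.const_mul _).const_add _)
  have heq : (fun t => corner d M lab (W (m + t)) k) =
      fun t => corner d M lab u k + ((M : ℝ) ^ u.length)⁻¹ * corner d M lab (W' t) k := by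
    funext t; rw [h t, corner_append hM]
  rw [heq] at h3
  exact tendsto_nhds_unique h3 h4

lemma wordTake_chain (i : ℕ → Fin (M ^ d)) :
    ∀ s t, s ≤ t → wordTake d M i s <+: wordTake d M i t :=
  fun _ _ h => wordTake_prefix i h

lemma PiInf_mem (hM : 3 ≤ M) (i : ℕ → Fin (M ^ d)) (n : ℕ) :
    PiInf d M lab i ∈ cube d M lab (wordTake d M i n) :=
  mem_cube_ciSup hM (wordTake_chain i) n

lemma PiInf_mem_unit (hM : 3 ≤ M) (i : ℕ → Fin (M ^ d)) :
    PiInf d M lab i ∈ cube d M lab ([] : List (Fin (M ^ d))) :=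
  PiInf_mem hM i 0

lemma PiInf_factor (hM : 3 ≤ M) (i : ℕ → Fin (M ^ d)) (n : ℕ) :
    PiInf d M lab i = hQ d M lab (wordTake d M i n) (PiInf d M lab (shiftW d M n i)) := by
  funext k
  exact ciSup_corner_factor hM (wordTake_chain i) (wordTake_chain (shiftW d M n i)) n
    (fun t => wordTake_add i n t) k

lemma dist_PiInf_shift (hM : 3 ≤ M) {i j : ℕ → Fin (M ^ d)} {n : ℕ}
    (h : wordTake d M i n = wordTake d M j n) :
    dist (PiInf d M lab i) (PiInf d M lab j) =
      ((M : ℝ) ^ n)⁻¹ * dist (PiInf d M lab (shiftW d M n i)) (PiInf d M lab (shiftW d M n j)) := by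
  rw [PiInf_factor hM i n, PiInf_factor hM j n, h, dist_hQ hM, wordTake_length]

end AuxSup

section AuxAlive

variable {d M : ℕ} {Ω : Type*} {X : List (Fin (M ^ d)) → Ω → Bool} {ω : Ω}

lemma alive_nil : Alive d M X ω ([] : List (Fin (M ^ d))) := by
  intro u hu hp
  exact absurd (List.prefix_nil.mp hp) hu

lemma alive_of_prefix {u w : List (Fin (M ^ d))} (h : u <+: w)
    (hw : Alive d M X ω w) : Alive d M X ω u :=
  fun v hv hvp => hw v hv (hvp.trans h)

lemma prefix_cancel {w p u : List (Fin (M ^ d))} (h : w ++ p <+: w ++ u) : p <+: u := by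
  obtain ⟨t, ht⟩ := h
  rw [List.append_assoc] at ht
  exact ⟨t, List.append_cancel_left ht⟩

lemma alive_append {w : List (Fin (M ^ d))} (hw : Alive d M X ω w) (u : List (Fin (M ^ d))) :
    Alive d M X ω (w ++ u) ↔ Alive d M (fun v ω' => X (w ++ v) ω') ω u := by
  constructor
  · intro h p hp hpu
    refine h (w ++ p) ?_ ?_
    · intro hc
      exact hp (List.append_eq_nil_iff.mp hc).2
    · obtain ⟨t, rfl⟩ := hpu
      exact ⟨t, by rw [List.append_assoc]⟩
  · intro h q hq hq2
    rcases le_or_gt q.length w.length with hlen | hlen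
    · exact hw q hq (List.prefix_of_prefix_length_le hq2 (w.prefix_append u) hlen)
    · have hwq : w <+: q :=
        List.prefix_of_prefix_length_le (w.prefix_append u) hq2 hlen.le
      obtain ⟨p, rfl⟩ := hwq
      have hp : p ≠ [] := by
        intro hc; rw [hc] at hlen; simp at hlen
      exact h p hp (prefix_cancel hq2)

end AuxAlive

section AuxSubst

variable {d M : ℕ} {Ω : Type*} {X : List (Fin (M ^ d)) → Ω → Bool} {ω : Ω}
  {e : List (Fin (M ^ d))}

lemma substAux_nil (pfx : List (Fin (M ^ d))) : substAux d M X e ω pfx ([] : List (Fin (M ^ d))) = ([]) := rfl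

lemma substAux_cons (pfx : List (Fin (M ^ d))) (a : Fin (M ^ d)) (r : List (Fin (M ^ d))) :
    substAux d M X e ω pfx (a :: r) =
      (if BdryDead d M X ω pfx then e ++ [a] else [a]) ++ substAux d M X e ω (pfx ++ [a]) r := rfl

lemma substAux_append (pfx u v : List (Fin (M ^ d))) :
    substAux d M X e ω pfx (u ++ v) =
      substAux d M X e ω pfx u ++ substAux d M X e ω (pfx ++ u) v := by
  induction u generalizing pfx with
  | nil => simp [substAux_nil]
  | cons a u ih =>
      rw [List.cons_append, substAux_cons, substAux_cons, ih (pfx ++ [a]), List.append_assoc,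
        List.append_assoc]
      simp

lemma substW_nil : substW d M X e ω ([] : List (Fin (M ^ d))) = ([]) := rfl

lemma substW_append (u v : List (Fin (M ^ d))) :
    substW d M X e ω (u ++ v) = substW d M X e ω u ++ substAux d M X e ω u v := by
  unfold substW
  rw [substAux_append]
  rfl

lemma substW_prefix {u w : List (Fin (M ^ d))} (h : u <+: w) :
    substW d M X e ω u <+: substW d M X e ω w := by
  obtain ⟨v, rfl⟩ := h
  rw [substW_append]
  exact List.prefix_append _ _

lemma substAux_eq_self (pfx : List (Fin (M ^ d))) (w : List (Fin (M ^ d)))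
    (h : ∀ u, u <+: w → u ≠ w → ¬ BdryDead d M X ω (pfx ++ u)) :
    substAux d M X e ω pfx w = w := by
  induction w generalizing pfx with
  | nil => rfl
  | cons a r ih =>
      rw [substAux_cons, if_neg ?_, List.singleton_append, List.cons_inj_right]
      · refine ih (pfx ++ [a]) ?_
        intro u hu hune
        have h2 := h (a :: u) (List.cons_prefix_cons.mpr ⟨rfl, hu⟩) (by simpa using hune)
        rw [List.append_assoc]
        simpa using h2
      · have h3 := h ([]) List.nil_prefix (by simp)
        simpa using h3

end AuxSubst

section AuxPlane

variable {d M : ℕ} {lab : Fin (M ^ d) → Fin d → Fin M}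

lemma corner_dyadic (hM : 3 ≤ M) (w : List (Fin (M ^ d))) (k : Fin d) :
    ∃ z : ℕ, corner d M lab w k = (z : ℝ) / (M : ℝ) ^ w.length := by
  have hMp := Mr_pos hM
  induction w with
  | nil => exact ⟨0, by simp [corner_nil]⟩
  | cons a w ih =>
      obtain ⟨z, hz⟩ := ih
      refine ⟨(lab a k : ℕ) * M ^ w.length + z, ?_⟩
      rw [corner_cons, hz, List.length_cons, pow_succ]
      have hpw : (0:ℝ) < (M : ℝ) ^ w.length := by positivity
      push_cast
      field_simp

lemma corner_plane_cases (hM : 3 ≤ M) {w : List (Fin (M ^ d))} (hw : 1 ≤ w.length)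
    (k : Fin d) (l : ℤ) :
    (l : ℝ) / M ≤ corner d M lab w k ∨
      corner d M lab w k + ((M : ℝ) ^ w.length)⁻¹ ≤ (l : ℝ) / M := by
  have hMp := Mr_pos hM
  obtain ⟨z, hz⟩ := corner_dyadic (lab := lab) hM w k
  obtain ⟨m, hm⟩ : ∃ m, w.length = m + 1 := ⟨w.length - 1, by omega⟩
  have hpw : (0:ℝ) < (M : ℝ) ^ w.length := by positivity
  have hl : (l : ℝ) / M = ((l * (M:ℤ) ^ m : ℤ) : ℝ) / (M : ℝ) ^ w.length := by
    rw [hm, pow_succ]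
    push_cast
    have hpm : (0:ℝ) < (M : ℝ) ^ m := by positivity
    field_simp
  rcases le_or_gt (l * (M:ℤ) ^ m) (z : ℤ) with h | h
  · left
    rw [hz, hl]
    gcongr
    exact_mod_cast h
  · right
    have hc : ((z : ℝ) + 1) ≤ ((l * (M:ℤ) ^ m : ℤ) : ℝ) := by
      have h2 : (z : ℤ) + 1 ≤ l * (M:ℤ) ^ m := h
      exact_mod_cast h2
    have hrw : (z:ℝ) / (M:ℝ) ^ w.length + ((M:ℝ) ^ w.length)⁻¹ =
        ((z:ℝ) + 1) / (M:ℝ) ^ w.length := by field_simp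
    rw [hz, hl, hrw]
    gcongr

lemma hQ_plane (hM : 3 ≤ M) {w : List (Fin (M ^ d))} (hw : 1 ≤ w.length)
    {ζ : Fin d → ℝ} (hζ : ζ ∈ cube d M lab ([] : List (Fin (M ^ d)))) (k : Fin d) (l : ℤ) :
    ((M : ℝ) ^ w.length)⁻¹ * min (ζ k) (1 - ζ k) ≤ |hQ d M lab w ζ k - (l : ℝ) / M| := by
  have hMp := Mr_pos hM
  have hpw : (0:ℝ) < (M : ℝ) ^ w.length := by positivity
  have hζk := hζ k
  rw [corner_nil, List.length_nil, pow_zero, inv_one, zero_add] at hζk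
  have hmin0 : 0 ≤ min (ζ k) (1 - ζ k) := le_min (by linarith [hζk.1]) (by linarith [hζk.2])
  rcases corner_plane_cases (lab := lab) hM hw k l with h | h
  · have key : ((M : ℝ) ^ w.length)⁻¹ * min (ζ k) (1 - ζ k) ≤ hQ d M lab w ζ k - (l:ℝ)/M := by
      simp only [hQ]
      have h1 : ((M : ℝ) ^ w.length)⁻¹ * min (ζ k) (1 - ζ k) ≤
          ((M : ℝ) ^ w.length)⁻¹ * ζ k :=
        mul_le_mul_of_nonneg_left (min_le_left _ _) (by positivity)
      linarith
    exact key.trans (le_abs_self _)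
  · have key : ((M : ℝ) ^ w.length)⁻¹ * min (ζ k) (1 - ζ k) ≤ (l:ℝ)/M - hQ d M lab w ζ k := by
      simp only [hQ]
      have h1 : ((M : ℝ) ^ w.length)⁻¹ * min (ζ k) (1 - ζ k) ≤
          ((M : ℝ) ^ w.length)⁻¹ * (1 - ζ k) :=
        mul_le_mul_of_nonneg_left (min_le_right _ _) (by positivity)
      nlinarith
    calc ((M : ℝ) ^ w.length)⁻¹ * min (ζ k) (1 - ζ k) ≤ (l:ℝ)/M - hQ d M lab w ζ k := key
    _ ≤ |hQ d M lab w ζ k - (l : ℝ) / M| := by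
        rw [abs_sub_comm]; exact le_abs_self _

lemma min_bound_of_cube_single (hM : 3 ≤ M) {c : Fin (M ^ d)} {k : Fin d}
    (hc1 : 1 ≤ (lab c k : ℕ)) (hc2 : (lab c k : ℕ) ≤ M - 2) {ζ : Fin d → ℝ}
    (hζ : ζ ∈ cube d M lab ([c])) : (M : ℝ)⁻¹ ≤ min (ζ k) (1 - ζ k) := by
  have hMp := Mr_pos hM
  have hζk := hζ k
  have hcor : corner d M lab ([c]) k = (lab c k : ℝ) * (M:ℝ)⁻¹ := by
    rw [corner_cons, corner_nil, add_zero, div_eq_mul_inv]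
  have hlen : (([c]) : List (Fin (M ^ d))).length = 1 := rfl
  rw [hcor, hlen, pow_one] at hζk
  have h1 : (1 : ℝ) ≤ (lab c k : ℝ) := by exact_mod_cast hc1
  have h2 : (lab c k : ℝ) ≤ (M : ℝ) - 2 := by
    have h2' : (lab c k : ℕ) + 2 ≤ M := by omega
    have h2'' := (Nat.cast_le (α := ℝ)).mpr h2'
    push_cast at h2''
    linarith
  have ht0 : (0:ℝ) ≤ (M:ℝ)⁻¹ := by positivity
  have hMt : (M:ℝ) * (M:ℝ)⁻¹ = 1 := mul_inv_cancel₀ hMp.ne'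
  apply le_min
  · have h3 := mul_le_mul_of_nonneg_right h1 ht0
    rw [one_mul] at h3
    linarith [hζk.1]
  · have h3 := mul_le_mul_of_nonneg_right h2 ht0
    have h4 : ((M:ℝ) - 2) * (M:ℝ)⁻¹ = 1 - 2 * (M:ℝ)⁻¹ := by
      rw [sub_mul, hMt]
    linarith [hζk.2]

end AuxPlane

section AuxG

variable {d M K : ℕ} {lab : Fin (M ^ d) → Fin d → Fin M} {e : List (Fin (M ^ d))}
  {L : ℝ} {g : (Fin d → ℝ) → (Fin d → ℝ)}

lemma mem_unit_iff {x : Fin d → ℝ} :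
    x ∈ cube d M lab ([] : List (Fin (M ^ d))) ↔ ∀ k, 0 ≤ x k ∧ x k ≤ 1 := by
  unfold cube
  simp [corner_nil]

lemma update_mem_unit {ζ : Fin d → ℝ} (hζ : ζ ∈ cube d M lab ([] : List (Fin (M ^ d))))
    {a : ℝ} (ha : 0 ≤ a) (ha1 : a ≤ 1) (k : Fin d) :
    Function.update ζ k a ∈ cube d M lab ([] : List (Fin (M ^ d))) := by
  rw [mem_unit_iff] at hζ ⊢
  intro k'
  rcases eq_or_ne k' k with rfl | hne
  · rw [Function.update_self]; exact ⟨ha, ha1⟩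
  · rw [Function.update_of_ne hne]; exact hζ k'

lemma dist_update (ζ : Fin d → ℝ) (k : Fin d) (a : ℝ) :
    dist ζ (Function.update ζ k a) = |ζ k - a| := by
  apply le_antisymm
  · rw [dist_pi_le_iff (abs_nonneg _)]
    intro k'
    rcases eq_or_ne k' k with rfl | hne
    · rw [Function.update_self, Real.dist_eq]
    · rw [Function.update_of_ne hne, dist_self]; exact abs_nonneg _
  · have h := dist_le_pi_dist ζ (Function.update ζ k a) k
    rwa [Function.update_self, Real.dist_eq] at h

lemma update_mem_frontier (hM : 3 ≤ M) {ζ : Fin d → ℝ}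
    (hζ : ζ ∈ cube d M lab ([] : List (Fin (M ^ d)))) (k : Fin d) {a : ℝ}
    (ha : a = 0 ∨ a = 1) :
    Function.update ζ k a ∈ frontier (cube d M lab ([] : List (Fin (M ^ d)))) := by
  have hmem : Function.update ζ k a ∈ cube d M lab ([] : List (Fin (M ^ d))) := by
    rcases ha with rfl | rfl
    · exact update_mem_unit hζ le_rfl zero_le_one k
    · exact update_mem_unit hζ zero_le_one le_rfl k
  constructor
  · exact subset_closure hmem
  · intro hint
    rw [mem_interior_iff_mem_nhds, Metric.mem_nhds_iff] at hint
    obtain ⟨ε, hε, hball⟩ := hint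
    rcases ha with rfl | rfl
    · set y := Function.update (Function.update ζ k (0:ℝ)) k (-(ε/2)) with hy
      have hyball : y ∈ Metric.ball (Function.update ζ k (0:ℝ)) ε := by
        rw [Metric.mem_ball, dist_comm, hy, Function.update_idem]
        have : dist (Function.update ζ k (0:ℝ)) (Function.update ζ k (-(ε/2))) ≤ ε/2 := by
          rw [dist_pi_le_iff (by linarith)]
          intro k'
          rcases eq_or_ne k' k with rfl | hne
          · rw [Function.update_self, Function.update_self, Real.dist_eq]
            rw [zero_sub, abs_neg, abs_neg, abs_of_nonneg (by linarith)]
          · rw [Function.update_of_ne hne, Function.update_of_ne hne, dist_self]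
            linarith
        calc dist (Function.update ζ k (0:ℝ)) (Function.update ζ k (-(ε/2))) ≤ ε/2 := this
        _ < ε := by linarith
      have hymem := hball hyball
      rw [mem_unit_iff] at hymem
      have := (hymem k).1
      rw [hy, Function.update_idem, Function.update_self] at this
      linarith
    · set y := Function.update (Function.update ζ k (1:ℝ)) k (1 + ε/2) with hy
      have hyball : y ∈ Metric.ball (Function.update ζ k (1:ℝ)) ε := by
        rw [Metric.mem_ball, dist_comm, hy, Function.update_idem]
        have : dist (Function.update ζ k (1:ℝ)) (Function.update ζ k (1 + ε/2)) ≤ ε/2 := by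
          rw [dist_pi_le_iff (by linarith)]
          intro k'
          rcases eq_or_ne k' k with rfl | hne
          · rw [Function.update_self, Function.update_self, Real.dist_eq]
            rw [show (1:ℝ) - (1 + ε/2) = -(ε/2) by ring, abs_neg, abs_of_nonneg (by linarith)]
          · rw [Function.update_of_ne hne, Function.update_of_ne hne, dist_self]
            linarith
        calc dist (Function.update ζ k (1:ℝ)) (Function.update ζ k (1 + ε/2)) ≤ ε/2 := this
        _ < ε := by linarith
      have hymem := hball hyball
      rw [mem_unit_iff] at hymem
      have := (hymem k).2
      rw [hy, Function.update_idem, Function.update_self] at this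
      linarith

lemma g_move (hM : 3 ≤ M) (hg : GSpec d M K lab e L g) (hL : 1 ≤ L)
    {ζ : Fin d → ℝ} (hζ : ζ ∈ cube d M lab ([] : List (Fin (M ^ d)))) (k : Fin d) :
    dist (g ζ) ζ ≤ (L + 1) * min (ζ k) (1 - ζ k) ∧
      dist (g ζ) ζ ≤ (L + 1) * min (g ζ k) (1 - g ζ k) := by
  have hgζ : g ζ ∈ cube d M lab ([] : List (Fin (M ^ d))) := hg.1.mapsTo hζ
  have hζ01 := (mem_unit_iff.mp hζ) k
  have hgζ01 := (mem_unit_iff.mp hgζ) k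
  constructor
  · -- use boundary point near ζ
    rcases le_total (ζ k) (1 - ζ k) with hside | hside
    · set w := Function.update ζ k (0:ℝ) with hw
      have hwf := update_mem_frontier hM hζ k (Or.inl rfl)
      have hwc : w ∈ cube d M lab ([] : List (Fin (M ^ d))) :=
        update_mem_unit hζ le_rfl zero_le_one k
      have hgw : g w = w := hg.2.2.1 w hwf
      have hdist : dist ζ w = ζ k := by
        rw [hw, dist_update, sub_zero, abs_of_nonneg hζ01.1]
      have hbl := (hg.2.1 ζ hζ w hwc).2
      rw [hgw] at hbl
      have hmin : min (ζ k) (1 - ζ k) = ζ k := min_eq_left hside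
      calc dist (g ζ) ζ ≤ dist (g ζ) w + dist w ζ := dist_triangle _ _ _
      _ ≤ L * dist ζ w + dist ζ w := by rw [dist_comm w ζ]; exact add_le_add_left hbl _
      _ = (L + 1) * (ζ k) := by rw [hdist]; ring
      _ = (L + 1) * min (ζ k) (1 - ζ k) := by rw [hmin]
    · set w := Function.update ζ k (1:ℝ) with hw
      have hwf := update_mem_frontier hM hζ k (Or.inr rfl)
      have hwc : w ∈ cube d M lab ([] : List (Fin (M ^ d))) :=
        update_mem_unit hζ zero_le_one le_rfl k
      have hgw : g w = w := hg.2.2.1 w hwf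
      have hdist : dist ζ w = 1 - ζ k := by
        rw [hw, dist_update, abs_of_nonpos (by linarith [hζ01.2]), neg_sub]
      have hbl := (hg.2.1 ζ hζ w hwc).2
      rw [hgw] at hbl
      have hmin : min (ζ k) (1 - ζ k) = 1 - ζ k := min_eq_right hside
      calc dist (g ζ) ζ ≤ dist (g ζ) w + dist w ζ := dist_triangle _ _ _
      _ ≤ L * dist ζ w + dist ζ w := by rw [dist_comm w ζ]; exact add_le_add_left hbl _
      _ = (L + 1) * (1 - ζ k) := by rw [hdist]; ring
      _ = (L + 1) * min (ζ k) (1 - ζ k) := by rw [hmin]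
  · -- use boundary point near g ζ
    rcases le_total (g ζ k) (1 - g ζ k) with hside | hside
    · set w := Function.update (g ζ) k (0:ℝ) with hw
      have hwf := update_mem_frontier hM hgζ k (Or.inl rfl)
      have hwc : w ∈ cube d M lab ([] : List (Fin (M ^ d))) :=
        update_mem_unit hgζ le_rfl zero_le_one k
      have hgw : g w = w := hg.2.2.1 w hwf
      have hdist : dist (g ζ) w = g ζ k := by
        rw [hw, dist_update, sub_zero, abs_of_nonneg hgζ01.1]
      have hbl := (hg.2.1 ζ hζ w hwc).1
      have hwζ : dist w ζ ≤ L * dist (g ζ) w := by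
        rw [dist_comm w ζ]
        have h2 : L⁻¹ * dist ζ w ≤ dist (g ζ) w := by rwa [hgw] at hbl
        have hL0 : (0:ℝ) < L := by linarith
        calc dist ζ w = L * (L⁻¹ * dist ζ w) := by field_simp
        _ ≤ L * dist (g ζ) w := mul_le_mul_of_nonneg_left h2 hL0.le
      have hmin : min (g ζ k) (1 - g ζ k) = g ζ k := min_eq_left hside
      calc dist (g ζ) ζ ≤ dist (g ζ) w + dist w ζ := dist_triangle _ _ _
      _ ≤ dist (g ζ) w + L * dist (g ζ) w := add_le_add_right hwζ _
      _ = (L + 1) * (g ζ k) := by rw [hdist]; ring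
      _ = (L + 1) * min (g ζ k) (1 - g ζ k) := by rw [hmin]
    · set w := Function.update (g ζ) k (1:ℝ) with hw
      have hwf := update_mem_frontier hM hgζ k (Or.inr rfl)
      have hwc : w ∈ cube d M lab ([] : List (Fin (M ^ d))) :=
        update_mem_unit hgζ zero_le_one le_rfl k
      have hgw : g w = w := hg.2.2.1 w hwf
      have hdist : dist (g ζ) w = 1 - g ζ k := by
        rw [hw, dist_update, abs_of_nonpos (by linarith [hgζ01.2]), neg_sub]
      have hbl := (hg.2.1 ζ hζ w hwc).1
      have hwζ : dist w ζ ≤ L * dist (g ζ) w := by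
        rw [dist_comm w ζ]
        have h2 : L⁻¹ * dist ζ w ≤ dist (g ζ) w := by rwa [hgw] at hbl
        have hL0 : (0:ℝ) < L := by linarith
        calc dist ζ w = L * (L⁻¹ * dist ζ w) := by field_simp
        _ ≤ L * dist (g ζ) w := mul_le_mul_of_nonneg_left h2 hL0.le
      have hmin : min (g ζ k) (1 - g ζ k) = 1 - g ζ k := min_eq_right hside
      calc dist (g ζ) ζ ≤ dist (g ζ) w + dist w ζ := dist_triangle _ _ _
      _ ≤ dist (g ζ) w + L * dist (g ζ) w := add_le_add_right hwζ _
      _ = (L + 1) * (1 - g ζ k) := by rw [hdist]; ring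
      _ = (L + 1) * min (g ζ k) (1 - g ζ k) := by rw [hmin]

end AuxG

section AuxG2

variable {d M K : ℕ} {lab : Fin (M ^ d) → Fin d → Fin M} {e : List (Fin (M ^ d))}
  {L : ℝ} {g : (Fin d → ℝ) → (Fin d → ℝ)}

lemma mem_concCube_unit (hM : 3 ≤ M) {x : Fin d → ℝ} :
    x ∈ concCube d (fun _ => (0:ℝ)) 1 (1 - 2 / (M:ℝ)) ↔
      ∀ k, (M:ℝ)⁻¹ ≤ x k ∧ x k ≤ 1 - (M:ℝ)⁻¹ := by
  have harith1 : ∀ k : Fin d, (fun _ => (0:ℝ)) k + (1 - (1 - 2 / (M:ℝ))) * 1 / 2 = (M:ℝ)⁻¹ :=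
    fun _ => by show (0:ℝ) + (1 - (1 - 2 / (M:ℝ))) * 1 / 2 = (M:ℝ)⁻¹; rw [zero_add]; ring
  have harith2 : ∀ k : Fin d, (fun _ => (0:ℝ)) k + (1 + (1 - 2 / (M:ℝ))) * 1 / 2 = 1 - (M:ℝ)⁻¹ :=
    fun _ => by
      show (0:ℝ) + (1 + (1 - 2 / (M:ℝ))) * 1 / 2 = 1 - (M:ℝ)⁻¹; rw [zero_add]; ring
  unfold concCube
  rw [Set.mem_setOf_eq]
  constructor <;> intro h k <;> have hk := h k
  · rw [harith1 k, harith2 k] at hk; exact hk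
  · rw [harith1 k, harith2 k]; exact hk

lemma g_eq_hQ (hM : 3 ≤ M) (hg : GSpec d M K lab e L g) (heK : e.length = K)
    {ζ : Fin d → ℝ} (hζ : ζ ∈ concCube d (fun _ => (0:ℝ)) 1 (1 - 2 / (M:ℝ))) :
    g ζ = hQ d M lab e ζ := by
  have hMp := Mr_pos hM
  have hKp : (0:ℝ) < (M:ℝ) ^ K := by positivity
  obtain ⟨v, hv⟩ := hg.2.2.2.1
  have himg := hg.2.2.2.2
  have hveq : ∀ k, v k = corner d M lab e k := by
    intro k
    have h1M : (M:ℝ)⁻¹ ≤ 1 - (M:ℝ)⁻¹ := by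
      have h3 : (3:ℝ) ≤ (M:ℝ) := by exact_mod_cast hM
      have hi : (M:ℝ)⁻¹ ≤ 1/3 := by
        rw [inv_eq_one_div]
        exact one_div_le_one_div_of_le (by norm_num) h3
      linarith
    have hz0 : (fun _ => (M:ℝ)⁻¹ : Fin d → ℝ) ∈ concCube d (fun _ => (0:ℝ)) 1 (1 - 2 / (M:ℝ)) :=
      (mem_concCube_unit hM).mpr (fun _ => ⟨le_rfl, h1M⟩)
    have hz1 : (fun _ => 1 - (M:ℝ)⁻¹ : Fin d → ℝ) ∈
        concCube d (fun _ => (0:ℝ)) 1 (1 - 2 / (M:ℝ)) :=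
      (mem_concCube_unit hM).mpr (fun _ => ⟨h1M, le_rfl⟩)
    have hg0 : g (fun _ => (M:ℝ)⁻¹) ∈
        concCube d (corner d M lab e) (((M:ℝ) ^ K)⁻¹) (1 - 2 / (M:ℝ)) := by
      rw [← himg]; exact Set.mem_image_of_mem g hz0
    have hg1 : g (fun _ => 1 - (M:ℝ)⁻¹) ∈
        concCube d (corner d M lab e) (((M:ℝ) ^ K)⁻¹) (1 - 2 / (M:ℝ)) := by
      rw [← himg]; exact Set.mem_image_of_mem g hz1
    have he0 := (hg0 k)
    have he1 := (hg1 k)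
    rw [hv _ hz0] at he0
    rw [hv _ hz1] at he1
    simp only [Pi.add_apply, Pi.smul_apply, smul_eq_mul] at he0 he1
    have hb0 := he0.1
    have hb1 := he1.2
    -- (1 - (1 - 2/M))/2 = 1/M and (1 + (1 - 2/M))/2 = 1 - 1/M
    have har1 : (1 - (1 - 2 / (M:ℝ))) * ((M:ℝ) ^ K)⁻¹ / 2 = ((M:ℝ) ^ K)⁻¹ * (M:ℝ)⁻¹ := by
      field_simp; ring
    have har2 : (1 + (1 - 2 / (M:ℝ))) * ((M:ℝ) ^ K)⁻¹ / 2 =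
        ((M:ℝ) ^ K)⁻¹ * (1 - (M:ℝ)⁻¹) := by
      field_simp; ring
    rw [har1] at hb0
    rw [har2] at hb1
    linarith
  funext k
  rw [hv ζ hζ]
  simp only [Pi.add_apply, Pi.smul_apply, smul_eq_mul, hQ, heK]
  rw [hveq k]
  ring

lemma not_LamB_bounds (hM : 3 ≤ M) (hlab : LabSpec d M lab) {c : Fin (M ^ d)}
    (hc : c ∉ LamB d M) (k : Fin d) : 1 ≤ (lab c k : ℕ) ∧ (lab c k : ℕ) ≤ M - 2 := by
  have h := hlab.2 c
  have hnot : ¬ ∃ k, (lab c k : ℕ) = 0 ∨ (lab c k : ℕ) = M - 1 := fun hex => hc (h.mpr hex)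
  push_neg at hnot
  have h1 := hnot k
  have h2 : (lab c k : ℕ) < M := (lab c k).2
  omega

lemma cube_single_subset_conc (hM : 3 ≤ M) {c : Fin (M ^ d)}
    (hc : ∀ k, 1 ≤ (lab c k : ℕ) ∧ (lab c k : ℕ) ≤ M - 2) :
    cube d M lab ([c]) ⊆ concCube d (fun _ => (0:ℝ)) 1 (1 - 2 / (M:ℝ)) := by
  intro x hx
  rw [mem_concCube_unit hM]
  intro k
  have hmin := min_bound_of_cube_single hM (hc k).1 (hc k).2 hx
  constructor
  · exact hmin.trans (min_le_left _ _)
  · have := hmin.trans (min_le_right _ _)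
    linarith

end AuxG2

section AuxFinish

variable {d M K : ℕ} {lab : Fin (M ^ d) → Fin d → Fin M} {e : List (Fin (M ^ d))}
  {L : ℝ} {g : (Fin d → ℝ) → (Fin d → ℝ)}

/-- Finishing lemma, substitution case: `x` and `z` both lie in non-boundary children of a
common cube of level `≥ 1`. -/
lemma finishA (hM : 3 ≤ M) {w : List (Fin (M ^ d))} (hw : 1 ≤ w.length)
    {c c' : Fin (M ^ d)} (hc : ∀ k, 1 ≤ (lab c k : ℕ) ∧ (lab c k : ℕ) ≤ M - 2)
    (hc' : ∀ k, 1 ≤ (lab c' k : ℕ) ∧ (lab c' k : ℕ) ≤ M - 2)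
    {x z : Fin d → ℝ} (hx : x ∈ cube d M lab (w ++ [c])) (hz : z ∈ cube d M lab (w ++ [c']))
    (k : Fin d) (l : ℤ) :
    dist z x ≤ (M:ℝ) * |x k - (l:ℝ)/M| ∧ dist z x ≤ (M:ℝ) * |z k - (l:ℝ)/M| := by
  have hMp := Mr_pos hM
  have hd1 : dist z x ≤ ((M:ℝ) ^ w.length)⁻¹ :=
    cube_dist_le hM (cube_append_subset hM w _ hz) (cube_append_subset hM w _ hx)
  have key : ∀ y : Fin d → ℝ, ∀ cc : Fin (M ^ d), (∀ k', 1 ≤ (lab cc k' : ℕ) ∧ (lab cc k' : ℕ) ≤ M - 2) →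
      y ∈ cube d M lab (w ++ [cc]) → ((M:ℝ) ^ w.length)⁻¹ ≤ (M:ℝ) * |y k - (l:ℝ)/M| := by
    intro y cc hcc hy
    have hζ : hQinv d M lab w y ∈ cube d M lab ([cc]) := (mem_cube_append_iff hM).mp hy
    have hζu : hQinv d M lab w y ∈ cube d M lab ([] : List (Fin (M ^ d))) := by
      have h2 : cube d M lab ([cc]) ⊆ cube d M lab ([] : List (Fin (M ^ d))) := by
        have := cube_append_subset (lab := lab) hM ([] : List (Fin (M ^ d))) ([cc])
        simpa using this
      exact h2 hζ
    have hmin := min_bound_of_cube_single hM (hcc k).1 (hcc k).2 hζ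
    have hplane := hQ_plane hM hw hζu k l
    rw [hQ_hQinv hM] at hplane
    have h3 : ((M:ℝ) ^ w.length)⁻¹ * (M:ℝ)⁻¹ ≤ |y k - (l:ℝ)/M| := by
      calc ((M:ℝ) ^ w.length)⁻¹ * (M:ℝ)⁻¹
          ≤ ((M:ℝ) ^ w.length)⁻¹ * min (hQinv d M lab w y k) (1 - hQinv d M lab w y k) :=
            mul_le_mul_of_nonneg_left hmin (by positivity)
      _ ≤ _ := hplane
    calc ((M:ℝ) ^ w.length)⁻¹ = (M:ℝ) * (((M:ℝ) ^ w.length)⁻¹ * (M:ℝ)⁻¹) := by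
          field_simp
    _ ≤ (M:ℝ) * |y k - (l:ℝ)/M| := mul_le_mul_of_nonneg_left h3 hMp.le
  exact ⟨hd1.trans (key x c hc hx), hd1.trans (key z c' hc' hz)⟩

/-- Finishing lemma, `g` case: `x = hQ w ζ`, `z = hQ w (g ζ)`. -/
lemma finishG (hM : 3 ≤ M) (hg : GSpec d M K lab e L g) (hL : 1 ≤ L)
    {w : List (Fin (M ^ d))} (hw : 1 ≤ w.length) {ζ : Fin d → ℝ}
    (hζ : ζ ∈ cube d M lab ([] : List (Fin (M ^ d)))) (k : Fin d) (l : ℤ) :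
    dist (hQ d M lab w (g ζ)) (hQ d M lab w ζ) ≤ (L + 1) * |hQ d M lab w ζ k - (l:ℝ)/M| ∧
      dist (hQ d M lab w (g ζ)) (hQ d M lab w ζ) ≤ (L + 1) * |hQ d M lab w (g ζ) k - (l:ℝ)/M| := by
  have hMp := Mr_pos hM
  have hgζ : g ζ ∈ cube d M lab ([] : List (Fin (M ^ d))) := hg.1.mapsTo hζ
  have hmove := g_move hM hg hL hζ k
  rw [dist_hQ hM]
  have hp1 := hQ_plane (lab := lab) hM hw hζ k l
  have hp2 := hQ_plane (lab := lab) hM hw hgζ k l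
  have hL1 : (0:ℝ) ≤ L + 1 := by linarith
  have hpw : (0:ℝ) ≤ ((M:ℝ) ^ w.length)⁻¹ := by positivity
  constructor
  · calc ((M:ℝ) ^ w.length)⁻¹ * dist (g ζ) ζ
        ≤ ((M:ℝ) ^ w.length)⁻¹ * ((L + 1) * min (ζ k) (1 - ζ k)) :=
          mul_le_mul_of_nonneg_left hmove.1 hpw
    _ = (L + 1) * (((M:ℝ) ^ w.length)⁻¹ * min (ζ k) (1 - ζ k)) := by ring
    _ ≤ (L + 1) * |hQ d M lab w ζ k - (l:ℝ)/M| := mul_le_mul_of_nonneg_left hp1 hL1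
  · calc ((M:ℝ) ^ w.length)⁻¹ * dist (g ζ) ζ
        ≤ ((M:ℝ) ^ w.length)⁻¹ * ((L + 1) * min (g ζ k) (1 - g ζ k)) :=
          mul_le_mul_of_nonneg_left hmove.2 hpw
    _ = (L + 1) * (((M:ℝ) ^ w.length)⁻¹ * min (g ζ k) (1 - g ζ k)) := by ring
    _ ≤ (L + 1) * |hQ d M lab w (g ζ) k - (l:ℝ)/M| := mul_le_mul_of_nonneg_left hp2 hL1

end AuxFinish

section AuxPlaneP

variable {d M : ℕ} {lab : Fin (M ^ d) → Fin d → Fin M}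

/-- Plane comparison, asymmetric version: `lab a k < lab b k`. -/
lemma planeP0 (hM : 3 ≤ M) {C₃ : ℝ} (hC₃ : 0 ≤ C₃) {a b : Fin (M ^ d)} {k : Fin d}
    (hklt : (lab a k : ℕ) < (lab b k : ℕ))
    {x z y w : Fin d → ℝ} (hx : x ∈ cube d M lab ([a])) (hz : z ∈ cube d M lab ([a]))
    (hy : y ∈ cube d M lab ([b])) (hw : w ∈ cube d M lab ([b]))
    (hxz : dist z x ≤ C₃ * |x k - ((lab a k : ℕ) + 1 : ℝ)/M| ∧
           dist z x ≤ C₃ * |z k - ((lab a k : ℕ) + 1 : ℝ)/M|)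
    (hyw : dist w y ≤ C₃ * |y k - ((lab a k : ℕ) + 1 : ℝ)/M| ∧
           dist w y ≤ C₃ * |w k - ((lab a k : ℕ) + 1 : ℝ)/M|) :
    dist x y ≤ (1 + C₃) * dist z w ∧ dist z w ≤ (1 + C₃) * dist x y := by
  have hMp := Mr_pos hM
  set v : ℝ := ((lab a k : ℕ) + 1 : ℝ)/M with hv
  -- coordinates on each side of the plane
  have hcora : corner d M lab ([a]) k = (lab a k : ℝ)/M := by
    rw [corner_cons, corner_nil, add_zero]
  have hcorb : corner d M lab ([b]) k = (lab b k : ℝ)/M := by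
    rw [corner_cons, corner_nil, add_zero]
  have hlen : (([a]) : List (Fin (M ^ d))).length = 1 := rfl
  have sideA : ∀ p : Fin d → ℝ, p ∈ cube d M lab ([a]) → p k ≤ v := by
    intro p hp
    have h := (hp k).2
    rw [hcora, hlen, pow_one] at h
    rw [hv]
    calc p k ≤ (lab a k : ℝ)/M + (M:ℝ)⁻¹ := h
    _ = ((lab a k : ℕ) + 1 : ℝ)/M := by push_cast; field_simp
  have sideB : ∀ q : Fin d → ℝ, q ∈ cube d M lab ([b]) → v ≤ q k := by
    intro q hq
    have h := (hq k).1
    rw [hcorb] at h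
    have hle : ((lab a k : ℕ) + 1 : ℝ) ≤ (lab b k : ℝ) := by
      have : (lab a k : ℕ) + 1 ≤ (lab b k : ℕ) := hklt
      exact_mod_cast this
    rw [hv]
    calc ((lab a k : ℕ) + 1 : ℝ)/M ≤ (lab b k : ℝ)/M := by gcongr
    _ ≤ q k := h
  have hxv := sideA x hx
  have hzv := sideA z hz
  have hyv := sideB y hy
  have hwv := sideB w hw
  -- rewrite the absolute values
  have haz : |z k - v| = v - z k := by rw [abs_of_nonpos (by linarith)]; ring
  have hax : |x k - v| = v - x k := by rw [abs_of_nonpos (by linarith)]; ring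
  have haw : |w k - v| = w k - v := by rw [abs_of_nonneg (by linarith)]
  have hay : |y k - v| = y k - v := by rw [abs_of_nonneg (by linarith)]
  have hzx := hxz.2; rw [haz] at hzx
  have hxx := hxz.1; rw [hax] at hxx
  have hww := hyw.2; rw [haw] at hww
  have hyy := hyw.1; rw [hay] at hyy
  -- key coordinate bounds
  have hzw : (v - z k) + (w k - v) ≤ dist z w := by
    have h := dist_le_pi_dist z w k
    rw [Real.dist_eq] at h
    have habs : w k - z k ≤ |z k - w k| := by
      rw [abs_sub_comm]
      exact le_abs_self _
    linarith [habs.trans h]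
  have hxy : y k - x k ≤ dist x y := by
    have h := dist_le_pi_dist x y k
    rw [Real.dist_eq, abs_sub_comm] at h
    linarith [(le_abs_self (y k - x k)).trans h]
  constructor
  · -- dist x y ≤ (1 + C₃) dist z w
    calc dist x y ≤ dist x z + dist z w + dist w y := dist_triangle4 x z w y
    _ ≤ C₃ * (v - z k) + dist z w + C₃ * (w k - v) := by
        rw [dist_comm x z]
        exact add_le_add (add_le_add_left hzx _) hww
    _ = dist z w + C₃ * ((v - z k) + (w k - v)) := by ring
    _ ≤ dist z w + C₃ * dist z w := by
        have := mul_le_mul_of_nonneg_left hzw hC₃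
        linarith
    _ = (1 + C₃) * dist z w := by ring
  · calc dist z w ≤ dist z x + dist x y + dist y w := dist_triangle4 z x y w
    _ ≤ C₃ * (v - x k) + dist x y + C₃ * (y k - v) := by
        rw [dist_comm y w]
        exact add_le_add (add_le_add_left hxx _) hyy
    _ = dist x y + C₃ * (y k - x k) := by ring
    _ ≤ dist x y + C₃ * dist x y := by
        have := mul_le_mul_of_nonneg_left hxy hC₃
        linarith
    _ = (1 + C₃) * dist x y := by ring

/-- Plane comparison: if `z, w` are `C₃`-plane-displacements of `x, y` in distinct level-1
cubes, then `dist z w` is comparable to `dist x y`. -/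
lemma planeP (hM : 3 ≤ M) (hlab : LabSpec d M lab) {C₃ : ℝ} (hC₃ : 0 ≤ C₃)
    {a b : Fin (M ^ d)} (hab : a ≠ b)
    {x z y w : Fin d → ℝ} (hx : x ∈ cube d M lab ([a])) (hz : z ∈ cube d M lab ([a]))
    (hy : y ∈ cube d M lab ([b])) (hw : w ∈ cube d M lab ([b]))
    (hxz : ∀ (k : Fin d) (l : ℤ),
      dist z x ≤ C₃ * |x k - (l:ℝ)/M| ∧ dist z x ≤ C₃ * |z k - (l:ℝ)/M|)
    (hyw : ∀ (k : Fin d) (l : ℤ),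
      dist w y ≤ C₃ * |y k - (l:ℝ)/M| ∧ dist w y ≤ C₃ * |w k - (l:ℝ)/M|) :
    dist x y ≤ (1 + C₃) * dist z w ∧ dist z w ≤ (1 + C₃) * dist x y := by
  have hk : ∃ k, lab a k ≠ lab b k := by
    by_contra hcon
    push_neg at hcon
    exact hab (hlab.1.1 (funext hcon))
  obtain ⟨k, hkne⟩ := hk
  rcases lt_or_gt_of_ne (fun h : (lab a k : ℕ) = (lab b k : ℕ) =>
      hkne (Fin.ext h)) with hlt | hgt
  · have hcast : (((lab a k : ℕ) + 1 : ℕ) : ℝ) = ((lab a k : ℕ) + 1 : ℝ) := by push_cast; ring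
    exact planeP0 hM hC₃ hlt hx hz hy hw
      (by have := hxz k (((lab a k : ℕ) + 1 : ℕ) : ℤ); rwa [show ((((lab a k : ℕ) + 1 : ℕ) : ℤ) : ℝ) = ((lab a k : ℕ) + 1 : ℝ) by push_cast; ring] at this)
      (by have := hyw k (((lab a k : ℕ) + 1 : ℕ) : ℤ); rwa [show ((((lab a k : ℕ) + 1 : ℕ) : ℤ) : ℝ) = ((lab a k : ℕ) + 1 : ℝ) by push_cast; ring] at this)
  · have h := planeP0 hM hC₃ hgt hy hw hx hz
      (by have := hyw k (((lab b k : ℕ) + 1 : ℕ) : ℤ); rwa [show ((((lab b k : ℕ) + 1 : ℕ) : ℤ) : ℝ) = ((lab b k : ℕ) + 1 : ℝ) by push_cast; ring] at this)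
      (by have := hxz k (((lab b k : ℕ) + 1 : ℕ) : ℤ); rwa [show ((((lab b k : ℕ) + 1 : ℕ) : ℤ) : ℝ) = ((lab b k : ℕ) + 1 : ℝ) by push_cast; ring] at this)
    rw [dist_comm y x, dist_comm w z] at h
    exact h

end AuxPlaneP

section AuxChain

variable {d M : ℕ} {Ω : Type*} {X : List (Fin (M ^ d)) → Ω → Bool} {ω : Ω}
  {e : List (Fin (M ^ d))} {lab : Fin (M ^ d) → Fin d → Fin M}

/-- The substitution word of `𝚒|_{t+1}` with the root substitution (if any) stripped. -/
def Schain (d M : ℕ) {Ω : Type*} (X : List (Fin (M ^ d)) → Ω → Bool)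
    (e : List (Fin (M ^ d))) (ω : Ω) (i : ℕ → Fin (M ^ d)) (t : ℕ) : List (Fin (M ^ d)) :=
  i 0 :: substAux d M X e ω ([i 0]) (wordTake d M (shiftW d M 1 i) t)

lemma Schain_zero (i : ℕ → Fin (M ^ d)) : Schain d M X e ω i 0 = [i 0] := rfl

lemma wordTake_one_add (i : ℕ → Fin (M ^ d)) (t : ℕ) :
    wordTake d M i (1 + t) = i 0 :: wordTake d M (shiftW d M 1 i) t := by
  rw [wordTake_add, wordTake_one]
  rfl

lemma substW_wordTake_succ (i : ℕ → Fin (M ^ d)) (t : ℕ) :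
    substW d M X e ω (wordTake d M i (t + 1)) =
      (if BdryDead d M X ω ([]) then e else ([])) ++ Schain d M X e ω i t := by
  rw [Nat.add_comm t 1, wordTake_one_add]
  show substAux d M X e ω ([]) _ = _
  rw [substAux_cons]
  by_cases hB : BdryDead d M X ω ([])
  · rw [if_pos hB, if_pos hB]
    simp [Schain]
  · rw [if_neg hB, if_neg hB]
    simp [Schain]

lemma Schain_succ (i : ℕ → Fin (M ^ d)) (t : ℕ) :
    Schain d M X e ω i (t + 1) = Schain d M X e ω i t ++
      (if BdryDead d M X ω (wordTake d M i (t + 1)) then e ++ [i (t + 1)] else [i (t + 1)]) := by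
  unfold Schain
  rw [wordTake_succ, substAux_append, substAux_cons, substAux_nil, List.append_nil]
  simp only [List.cons_append, List.nil_append]
  have h2 : shiftW d M 1 i t = i (t + 1) := by
    show i (1 + t) = i (t + 1); rw [Nat.add_comm]
  have h3 : i 0 :: wordTake d M (shiftW d M 1 i) t = wordTake d M i (t + 1) := by
    rw [Nat.add_comm t 1, wordTake_one_add]
  rw [h2]
  simp only [h3]

lemma Schain_chain (i : ℕ → Fin (M ^ d)) :
    ∀ s t : ℕ, s ≤ t → Schain d M X e ω i s <+: Schain d M X e ω i t := by
  intro s t hst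
  induction t with
  | zero => rw [Nat.le_zero.mp hst]
  | succ t ih =>
      rcases Nat.lt_or_ge s (t+1) with h | h
      · have := ih (by omega)
        rw [Schain_succ]
        exact this.trans (List.prefix_append _ _)
      · rw [Nat.le_antisymm hst h]

lemma Schain_eq_wordTake (i : ℕ → Fin (M ^ d)) (t : ℕ)
    (h : ∀ r, 1 ≤ r → r ≤ t → ¬ BdryDead d M X ω (wordTake d M i r)) :
    Schain d M X e ω i t = wordTake d M i (t + 1) := by
  unfold Schain
  rw [Nat.add_comm t 1, wordTake_one_add]
  congr 1
  apply substAux_eq_self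
  intro u hu hune
  have hu' := prefix_wordTake hu
  have hlen : u.length ≤ t := by
    have := hu.length_le
    rwa [wordTake_length] at this
  have hlt : u.length < t := by
    rcases Nat.lt_or_ge u.length t with h' | h'
    · exact h'
    · exfalso
      apply hune
      rw [hu']
      congr 1
      omega
  have heq : ([i 0] : List (Fin (M ^ d))) ++ u = wordTake d M i (1 + u.length) := by
    rw [wordTake_one_add, List.singleton_append]
    exact congrArg _ hu'
  rw [heq]
  exact h (1 + u.length) (by omega) (by omega)

lemma exists_death (hnT : ¬ TInf d M X ω i) :
    ∃ n₁ : ℕ, Alive d M X ω (wordTake d M i n₁) ∧ ¬ Alive d M X ω (wordTake d M i (n₁ + 1)) ∧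
      ∀ t ≤ n₁, Alive d M X ω (wordTake d M i t) := by
  have hex : ∃ t, ¬ Alive d M X ω (wordTake d M i t) := by
    unfold TInf at hnT
    push_neg at hnT
    exact hnT
  classical
  set t₀ := Nat.find hex with ht₀def
  have ht₀ : ¬ Alive d M X ω (wordTake d M i t₀) := Nat.find_spec hex
  have hmin : ∀ s < t₀, Alive d M X ω (wordTake d M i s) := by
    intro s hs
    by_contra hc
    exact Nat.find_min hex hs hc
  have ht₀pos : 1 ≤ t₀ := by
    rcases Nat.eq_zero_or_pos t₀ with h | h
    · exfalso
      apply ht₀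
      rw [h, wordTake_zero]
      exact alive_nil
    · exact h
  refine ⟨t₀ - 1, hmin _ (by omega), ?_, fun t ht => hmin t (by omega)⟩
  rw [show t₀ - 1 + 1 = t₀ by omega]
  exact ht₀

lemma alive_mono_take {i : ℕ → Fin (M ^ d)} {s t : ℕ} (hst : s ≤ t)
    (h : Alive d M X ω (wordTake d M i t)) : Alive d M X ω (wordTake d M i s) :=
  alive_of_prefix (wordTake_prefix i hst) h

end AuxChain

section AuxWordDisp

variable {d M K : ℕ} {lab : Fin (M ^ d) → Fin d → Fin M} {Ω : Type*}
  {X : List (Fin (M ^ d)) → Ω → Bool} {ω : Ω} {e : List (Fin (M ^ d))}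
  {L : ℝ} {g : (Fin d → ℝ) → (Fin d → ℝ)} {F : (ℕ → Fin (M ^ d)) → (Fin d → ℝ)}

lemma subst_take_chain (i : ℕ → Fin (M ^ d)) :
    ∀ s t : ℕ, s ≤ t → substW d M X e ω (wordTake d M i s) <+: substW d M X e ω (wordTake d M i t) :=
  fun _ _ h => substW_prefix (wordTake_prefix i h)

lemma F_mem_of_TInf (hM : 3 ≤ M) (hF : ExtMapSpec d M lab X e g ω F)
    {i : ℕ → Fin (M ^ d)} (hT : TInf d M X ω i) (t : ℕ) :
    F i ∈ cube d M lab (substW d M X e ω (wordTake d M i t)) := by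
  rw [hF.1 i hT]
  exact mem_cube_ciSup hM (subst_take_chain i) t

lemma F_death_formula (hM : 3 ≤ M) (hg : GSpec d M K lab e L g)
    (hF : ExtMapSpec d M lab X e g ω F) {i : ℕ → Fin (M ^ d)} {n₁ : ℕ}
    (h1 : Alive d M X ω (wordTake d M i n₁)) (h2 : ¬ Alive d M X ω (wordTake d M i (n₁ + 1))) :
    ∃ ζ, ζ ∈ cube d M lab ([] : List (Fin (M ^ d))) ∧
      F i = hQ d M lab (substW d M X e ω (wordTake d M i n₁)) ζ ∧
      (BdryDead d M X ω (wordTake d M i n₁) → ζ = g (PiInf d M lab (shiftW d M n₁ i))) ∧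
      (¬ BdryDead d M X ω (wordTake d M i n₁) → ζ = PiInf d M lab (shiftW d M n₁ i)) := by
  by_cases hBd : BdryDead d M X ω (wordTake d M i n₁)
  · exact ⟨g (PiInf d M lab (shiftW d M n₁ i)), hg.1.mapsTo (PiInf_mem_unit hM _),
      (hF.2 i n₁ h1 h2).2 hBd, fun _ => rfl, fun h => absurd hBd h⟩
  · have hEx : ∃ j ∈ LamB d M, Alive d M X ω (wordTake d M i n₁ ++ [j]) := by
      unfold BdryDead at hBd
      push_neg at hBd
      exact hBd
    exact ⟨PiInf d M lab (shiftW d M n₁ i), PiInf_mem_unit hM _,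
      (hF.2 i n₁ h1 h2).1 hEx, fun h => absurd h hBd, fun _ => rfl⟩

lemma F_mem_of_alive (hM : 3 ≤ M) (hg : GSpec d M K lab e L g)
    (hF : ExtMapSpec d M lab X e g ω F) {i : ℕ → Fin (M ^ d)} {t : ℕ}
    (ht : Alive d M X ω (wordTake d M i t)) :
    F i ∈ cube d M lab (substW d M X e ω (wordTake d M i t)) := by
  by_cases hT : TInf d M X ω i
  · exact F_mem_of_TInf hM hF hT t
  · obtain ⟨n₁, h1, h2, hall⟩ := exists_death hT
    have htn : t ≤ n₁ := by
      by_contra hc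
      push_neg at hc
      exact h2 (alive_mono_take (by omega) ht)
    obtain ⟨ζ, hζ, hform, -, -⟩ := F_death_formula hM hg hF h1 h2
    rw [hform]
    exact cube_prefix hM (subst_take_chain i t n₁ htn) (hQ_mem hM hζ _)

lemma PiTilde_no_events (hM : 3 ≤ M) {i : ℕ → Fin (M ^ d)}
    (hnoev : ∀ r, 1 ≤ r → ¬ BdryDead d M X ω (wordTake d M i r)) :
    PiTilde d M lab X e ω i =
      hQ d M lab (if BdryDead d M X ω ([] : List (Fin (M ^ d))) then e else ([]))
        (PiInf d M lab i) := by
  set E₀ := if BdryDead d M X ω ([] : List (Fin (M ^ d))) then e else ([]) with hE₀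
  funext k
  have hWchain : ∀ s t : ℕ, s ≤ t →
      substW d M X e ω (wordTake d M i s) <+: substW d M X e ω (wordTake d M i t) :=
    subst_take_chain i
  have hW'chain : ∀ s t : ℕ, s ≤ t → wordTake d M i (s + 1) <+: wordTake d M i (t + 1) :=
    fun s t h => wordTake_prefix i (by omega)
  have hWW' : ∀ t, substW d M X e ω (wordTake d M i (1 + t)) = E₀ ++ wordTake d M i (t + 1) := by
    intro t
    rw [Nat.add_comm 1 t, substW_wordTake_succ,
      Schain_eq_wordTake i t (fun r hr1 hr2 => hnoev r hr1)]
  have h1 := ciSup_corner_factor (lab := lab) hM hWchain hW'chain 1 hWW' k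
  have hx : (⨆ t, corner d M lab (wordTake d M i (t + 1)) k) =
      ⨆ t, corner d M lab (wordTake d M i t) k := by
    have hWW2 : ∀ t, wordTake d M i (1 + t) =
        ([] : List (Fin (M ^ d))) ++ wordTake d M i (t + 1) := by
      intro t
      rw [List.nil_append, Nat.add_comm]
    have h2 := ciSup_corner_factor (lab := lab) hM (wordTake_chain i) hW'chain 1 hWW2 k
    rw [h2, corner_nil, List.length_nil, pow_zero, inv_one, zero_add, one_mul]
  show (⨆ t, corner d M lab (substW d M X e ω (wordTake d M i t)) k) = _
  rw [h1, hx]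
  rfl

/-- Case A finishing: events structure with a substitution at level `r+1` while alive. -/
lemma caseA_bounds (hM : 3 ≤ M) (hlab : LabSpec d M lab) (he : EtaSpec d M K e) (hL : 1 ≤ L)
    {i : ℕ → Fin (M ^ d)} {r : ℕ} {z : Fin d → ℝ}
    (hiρ : i (r + 1) ∉ LamB d M)
    (hz : z ∈ cube d M lab (wordTake d M i (r + 1) ++ (e ++ [i (r + 1)])))
    (k : Fin d) (l : ℤ) :
    dist z (PiInf d M lab i) ≤ (L + 1) * (M:ℝ) * |PiInf d M lab i k - (l:ℝ)/M| ∧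
      dist z (PiInf d M lab i) ≤ (L + 1) * (M:ℝ) * |z k - (l:ℝ)/M| := by
  have hMp := Mr_pos hM
  obtain ⟨hK1, heK, a, l', he_eq, ha⟩ := he
  have hx : PiInf d M lab i ∈ cube d M lab (wordTake d M i (r + 1) ++ [i (r + 1)]) := by
    rw [← wordTake_succ]
    exact PiInf_mem hM i (r + 2)
  have hz' : z ∈ cube d M lab (wordTake d M i (r + 1) ++ [a]) := by
    have hrw : wordTake d M i (r + 1) ++ (e ++ [i (r + 1)]) =
        (wordTake d M i (r + 1) ++ [a]) ++ (l' ++ [i (r + 1)]) := by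
      rw [he_eq]
      simp [List.append_assoc]
    rw [hrw] at hz
    exact cube_append_subset hM _ _ hz
  have hw1 : 1 ≤ (wordTake d M i (r + 1)).length := by
    rw [wordTake_length]; omega
  have hfin := finishA hM hw1 (not_LamB_bounds hM hlab hiρ) (not_LamB_bounds hM hlab ha)
    hx hz' k l
  have henl : ∀ t : ℝ, 0 ≤ t → (M:ℝ) * t ≤ (L + 1) * (M:ℝ) * t := by
    intro t ht
    have h0 : (0:ℝ) ≤ L * ((M:ℝ) * t) :=
      mul_nonneg (by linarith) (mul_nonneg hMp.le ht)
    nlinarith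
  exact ⟨hfin.1.trans (henl _ (abs_nonneg _)), hfin.2.trans (henl _ (abs_nonneg _))⟩

/-- The central displacement lemma: each point moves by at most a constant times its
distance to any level-one hyperplane, modulo the root substitution. -/
lemma word_disp (hM : 3 ≤ M) (hlab : LabSpec d M lab) (he : EtaSpec d M K e)
    (hg : GSpec d M K lab e L g) (hL : 1 ≤ L) (hF : ExtMapSpec d M lab X e g ω F)
    (i : ℕ → Fin (M ^ d))
    (hB1 : BdryDead d M X ω ([] : List (Fin (M ^ d))) → Alive d M X ω (wordTake d M i 1)) :
    ∃ z, F i = hQ d M lab (if BdryDead d M X ω ([] : List (Fin (M ^ d))) then e else ([])) z ∧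
      z ∈ cube d M lab ([i 0]) ∧
      ∀ (k : Fin d) (l : ℤ),
        dist z (PiInf d M lab i) ≤ (L + 1) * (M:ℝ) * |PiInf d M lab i k - (l:ℝ)/M| ∧
        dist z (PiInf d M lab i) ≤ (L + 1) * (M:ℝ) * |z k - (l:ℝ)/M| := by
  classical
  have hMp := Mr_pos hM
  set E₀ := if BdryDead d M X ω ([] : List (Fin (M ^ d))) then e else ([]) with hE₀
  set x := PiInf d M lab i with hx
  have htriv : ∀ k : Fin d, ∀ l : ℤ, ∀ y : ℝ,
      dist x x ≤ (L + 1) * (M:ℝ) * |y - (l:ℝ)/M| := by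
    intro k l y
    rw [dist_self]
    exact mul_nonneg (mul_nonneg (by linarith) hMp.le) (abs_nonneg _)
  -- case A packaging
  have hcaseA : ∀ r : ℕ, BdryDead d M X ω (wordTake d M i (r + 1)) →
      (∀ s, 1 ≤ s → s ≤ r → ¬ BdryDead d M X ω (wordTake d M i s)) →
      Alive d M X ω (wordTake d M i (r + 2)) →
      F i ∈ cube d M lab (substW d M X e ω (wordTake d M i (r + 2))) →
      ∃ z, F i = hQ d M lab E₀ z ∧ z ∈ cube d M lab ([i 0]) ∧
        ∀ (k : Fin d) (l : ℤ),
          dist z x ≤ (L + 1) * (M:ℝ) * |x k - (l:ℝ)/M| ∧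
          dist z x ≤ (L + 1) * (M:ℝ) * |z k - (l:ℝ)/M| := by
    intro r hBd hnoev hAl hFmem
    rw [show r + 2 = (r + 1) + 1 from rfl, substW_wordTake_succ] at hFmem
    set z := hQinv d M lab E₀ (F i) with hzdef
    have hz : z ∈ cube d M lab (Schain d M X e ω i (r + 1)) :=
      (mem_cube_append_iff hM).mp hFmem
    have hFz : F i = hQ d M lab E₀ z := (hQ_hQinv hM E₀ (F i)).symm
    have hSch : Schain d M X e ω i (r + 1) =
        wordTake d M i (r + 1) ++ (e ++ [i (r + 1)]) := by
      rw [Schain_succ, if_pos hBd, Schain_eq_wordTake i r hnoev]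
    have hiρ : i (r + 1) ∉ LamB d M := by
      intro hmem
      apply hBd (i (r + 1)) hmem
      rw [← wordTake_succ]
      exact hAl
    have hz0 : z ∈ cube d M lab ([i 0]) := by
      have := cube_prefix hM (Schain_chain i 0 (r + 1) (by omega)) hz
      rwa [Schain_zero] at this
    refine ⟨z, hFz, hz0, ?_⟩
    intro k l
    exact caseA_bounds hM hlab he hL hiρ (hSch ▸ hz) k l
  by_cases hT : TInf d M X ω i
  · by_cases hr1 : ∃ r, BdryDead d M X ω (wordTake d M i (r + 1))
    · set r := Nat.find hr1 with hrdef
      have hBd : BdryDead d M X ω (wordTake d M i (r + 1)) := Nat.find_spec hr1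
      have hnoev : ∀ s, 1 ≤ s → s ≤ r → ¬ BdryDead d M X ω (wordTake d M i s) := by
        intro s hs1 hs2
        have : s - 1 < r := by omega
        have h2 := Nat.find_min hr1 this
        rwa [show s - 1 + 1 = s by omega] at h2
      exact hcaseA r hBd hnoev (hT _) (F_mem_of_TInf hM hF hT _)
    · -- no events at all above level 0: F i = hQ E₀ x
      push_neg at hr1
      refine ⟨x, ?_, ?_, fun k l => ⟨htriv k l _, htriv k l _⟩⟩
      · rw [hF.1 i hT]
        exact PiTilde_no_events hM (fun s hs => by
          obtain ⟨s', rfl⟩ : ∃ s', s = s' + 1 := ⟨s - 1, by omega⟩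
          exact hr1 s')
      · have := PiInf_mem (lab := lab) hM i 1
        rwa [wordTake_one] at this
  · obtain ⟨n₁, h1, h2, hall⟩ := exists_death hT
    by_cases hr1 : ∃ r, r + 1 ≤ n₁ ∧ BdryDead d M X ω (wordTake d M i (r + 1))
    · set r := Nat.find hr1 with hrdef
      obtain ⟨hrn, hBd⟩ := Nat.find_spec hr1
      have hnoev : ∀ s, 1 ≤ s → s ≤ r → ¬ BdryDead d M X ω (wordTake d M i s) := by
        intro s hs1 hs2 hcon
        have hlt : s - 1 < r := by omega
        exact Nat.find_min hr1 hlt ⟨by omega, by rwa [show s - 1 + 1 = s by omega]⟩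
      rcases Nat.lt_or_ge (r + 1) n₁ with hlt | hge
      · -- event strictly before death: case A
        exact hcaseA r hBd hnoev (hall _ (by omega))
          (F_mem_of_alive hM hg hF (hall _ (by omega)))
      · -- event exactly at death level: case G
        have hn₁ : n₁ = r + 1 := by omega
        obtain ⟨ζ, hζ, hform, hbd, -⟩ := F_death_formula hM hg hF h1 h2
        have hζval : ζ = g (PiInf d M lab (shiftW d M n₁ i)) := hbd (hn₁ ▸ hBd)
        have hsub : substW d M X e ω (wordTake d M i n₁) = E₀ ++ wordTake d M i n₁ := by
          rw [hn₁, substW_wordTake_succ, Schain_eq_wordTake i r hnoev]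
        set w := wordTake d M i n₁ with hwdef
        set ζ₀ := PiInf d M lab (shiftW d M n₁ i) with hζ₀def
        have hζ₀mem : ζ₀ ∈ cube d M lab ([] : List (Fin (M ^ d))) := PiInf_mem_unit hM _
        set z := hQ d M lab w (g ζ₀) with hzdef
        have hFz : F i = hQ d M lab E₀ z := by
          rw [hform, hζval, hsub, hQ_append hM]
        have hxw : x = hQ d M lab w ζ₀ := PiInf_factor hM i n₁
        have hw1 : 1 ≤ w.length := by
          rw [hwdef, wordTake_length]; omega
        have hz0 : z ∈ cube d M lab ([i 0]) := by
          have hzw : z ∈ cube d M lab w := hQ_mem hM (hg.1.mapsTo hζ₀mem) w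
          have hpre : wordTake d M i 1 <+: w := wordTake_prefix i (by omega)
          have := cube_prefix hM hpre hzw
          rwa [wordTake_one] at this
        refine ⟨z, hFz, hz0, ?_⟩
        intro k l
        have hfin := finishG hM hg hL hw1 hζ₀mem k l
        rw [← hxw, ← hzdef] at hfin
        have henl : ∀ t : ℝ, 0 ≤ t → (L + 1) * t ≤ (L + 1) * (M:ℝ) * t := by
          intro t ht
          have h0 : (0:ℝ) ≤ (L + 1) * ((M:ℝ) - 1) * t := by
            apply mul_nonneg (mul_nonneg (by linarith) ?_) ht
            have h3 : (3:ℝ) ≤ (M:ℝ) := by exact_mod_cast hM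
            linarith
          nlinarith
        exact ⟨hfin.1.trans (henl _ (abs_nonneg _)), hfin.2.trans (henl _ (abs_nonneg _))⟩
    · -- no events up to the death level: F i = hQ E₀ x
      push_neg at hr1
      rcases Nat.eq_zero_or_pos n₁ with hn0 | hn1
      · -- dies at level 1; the root is not boundary-dead
        have hnB : ¬ BdryDead d M X ω ([] : List (Fin (M ^ d))) := by
          intro hB
          exact (hn0 ▸ h2) (hB1 hB)
        have hE0nil : E₀ = ([] : List (Fin (M ^ d))) := if_neg hnB
        obtain ⟨ζ, hζ, hform, -, hno⟩ := F_death_formula hM hg hF h1 h2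
        have hζval : ζ = PiInf d M lab (shiftW d M n₁ i) := hno (by rwa [hn0, wordTake_zero])
        refine ⟨x, ?_, ?_, fun k l => ⟨htriv k l _, htriv k l _⟩⟩
        · rw [hform, hζval, hn0, wordTake_zero, substW_nil, hQ_nil, shiftW_zero, hE0nil, hQ_nil]
        · have := PiInf_mem (lab := lab) hM i 1
          rwa [wordTake_one] at this
      · have hnoev : ∀ s, 1 ≤ s → s ≤ n₁ - 1 → ¬ BdryDead d M X ω (wordTake d M i s) := by
          intro s hs1 hs2 hcon
          exact hr1 (s - 1) (by omega) (by rwa [show s - 1 + 1 = s by omega])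
        have hBdn : ¬ BdryDead d M X ω (wordTake d M i n₁) := by
          intro hcon
          exact hr1 (n₁ - 1) (by omega) (by rwa [show n₁ - 1 + 1 = n₁ by omega])
        obtain ⟨ζ, hζ, hform, -, hno⟩ := F_death_formula hM hg hF h1 h2
        have hζval : ζ = PiInf d M lab (shiftW d M n₁ i) := hno hBdn
        have hsub : substW d M X e ω (wordTake d M i n₁) = E₀ ++ wordTake d M i n₁ := by
          rw [show n₁ = (n₁ - 1) + 1 by omega, substW_wordTake_succ,
            Schain_eq_wordTake i (n₁ - 1) hnoev]
        refine ⟨x, ?_, ?_, fun k l => ⟨htriv k l _, htriv k l _⟩⟩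
        · rw [hform, hζval, hsub, hQ_append hM, ← PiInf_factor hM i n₁]
        · have := PiInf_mem (lab := lab) hM i 1
          rwa [wordTake_one] at this

end AuxWordDisp

section AuxCrux

variable {d M K : ℕ} {lab : Fin (M ^ d) → Fin d → Fin M} {Ω : Type*}
  {X : List (Fin (M ^ d)) → Ω → Bool} {ω : Ω} {e : List (Fin (M ^ d))}
  {L : ℝ} {g : (Fin d → ℝ) → (Fin d → ℝ)} {F : (ℕ → Fin (M ^ d)) → (Fin d → ℝ)}

lemma cube_single_sub_unit (hM : 3 ≤ M) (c : Fin (M ^ d)) :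
    cube d M lab ([c]) ⊆ cube d M lab ([] : List (Fin (M ^ d))) := by
  have h := cube_append_subset (lab := lab) hM ([] : List (Fin (M ^ d))) ([c])
  simpa using h

/-- The crux comparison at level zero: if two words differ in their first symbol, then the
distance of their images under the extended substitution map is comparable to the distance
of their projections. -/
lemma crux (hM : 3 ≤ M) (hlab : LabSpec d M lab) (he : EtaSpec d M K e)
    (hg : GSpec d M K lab e L g) (hL : 1 ≤ L) (hF : ExtMapSpec d M lab X e g ω F)
    {i j : ℕ → Fin (M ^ d)} (hij : i 0 ≠ j 0) :
    dist (PiInf d M lab i) (PiInf d M lab j) ≤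
        (L * (1 + (L + 1) * M)) * dist (F i) (F j) ∧
      dist (F i) (F j) ≤ (L * (1 + (L + 1) * M)) * dist (PiInf d M lab i) (PiInf d M lab j) := by
  classical
  have hMp := Mr_pos hM
  set C₃ := (L + 1) * (M:ℝ) with hC₃def
  have hC₃ : 0 ≤ C₃ := mul_nonneg (by linarith) hMp.le
  have hL0 : (0:ℝ) < L := by linarith
  set x := PiInf d M lab i with hxdef
  set y := PiInf d M lab j with hydef
  have hxmem : x ∈ cube d M lab ([i 0]) := by
    have := PiInf_mem (lab := lab) hM i 1
    rwa [wordTake_one] at this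
  have hymem : y ∈ cube d M lab ([j 0]) := by
    have := PiInf_mem (lab := lab) hM j 1
    rwa [wordTake_one] at this
  by_cases hB : BdryDead d M X ω ([] : List (Fin (M ^ d)))
  · -- root substitution: conjugate through g
    have hword : ∀ i' : ℕ → Fin (M ^ d), ∃ z, F i' = g z ∧ z ∈ cube d M lab ([i' 0]) ∧
        ∀ (k : Fin d) (l : ℤ),
          dist z (PiInf d M lab i') ≤ C₃ * |PiInf d M lab i' k - (l:ℝ)/M| ∧
          dist z (PiInf d M lab i') ≤ C₃ * |z k - (l:ℝ)/M| := by
      intro i'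
      by_cases hA : Alive d M X ω (wordTake d M i' 1)
      · obtain ⟨z, hFz, hz0, hbnd⟩ := word_disp hM hlab he hg hL hF i' (fun _ => hA)
        rw [if_pos hB] at hFz
        have hi0 : i' 0 ∉ LamB d M := by
          intro hmem
          exact hB (i' 0) hmem (by
            rw [List.nil_append, ← wordTake_one i']
            exact hA)
        have hzI := cube_single_subset_conc hM (not_LamB_bounds hM hlab hi0) hz0
        have hgz := g_eq_hQ hM hg he.2.1 hzI
        exact ⟨z, by rw [hFz, ← hgz], hz0, hbnd⟩
      · have h1 : Alive d M X ω (wordTake d M i' 0) := by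
          rw [wordTake_zero]; exact alive_nil
        have hform := (hF.2 i' 0 h1 hA).2 (by
          intro jj hjj
          rw [wordTake_zero]
          exact hB jj hjj)
        rw [wordTake_zero, substW_nil, hQ_nil, shiftW_zero] at hform
        refine ⟨PiInf d M lab i', hform, ?_, ?_⟩
        · have := PiInf_mem (lab := lab) hM i' 1
          rwa [wordTake_one] at this
        · intro k l
          rw [dist_self]
          exact ⟨mul_nonneg hC₃ (abs_nonneg _), mul_nonneg hC₃ (abs_nonneg _)⟩
    obtain ⟨zi, hFi, hzi0, hbi⟩ := hword i
    obtain ⟨zj, hFj, hzj0, hbj⟩ := hword j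
    have hplane := planeP hM hlab hC₃ hij hxmem hzi0 hymem hzj0 (hbi) (hbj)
    have hziu := cube_single_sub_unit hM (i 0) hzi0
    have hzju := cube_single_sub_unit hM (j 0) hzj0
    have hbil := hg.2.1 zi hziu zj hzju
    have hZD : dist zi zj ≤ L * dist (F i) (F j) := by
      rw [hFi, hFj]
      have h1 := hbil.1
      calc dist zi zj = L * (L⁻¹ * dist zi zj) := by field_simp
      _ ≤ L * dist (g zi) (g zj) := mul_le_mul_of_nonneg_left h1 hL0.le
    have hDZ : dist (F i) (F j) ≤ L * dist zi zj := by
      rw [hFi, hFj]; exact hbil.2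
    constructor
    · calc dist x y ≤ (1 + C₃) * dist zi zj := hplane.1
      _ ≤ (1 + C₃) * (L * dist (F i) (F j)) :=
          mul_le_mul_of_nonneg_left hZD (by linarith)
      _ = (L * (1 + (L + 1) * M)) * dist (F i) (F j) := by rw [hC₃def]; ring
    · calc dist (F i) (F j) ≤ L * dist zi zj := hDZ
      _ ≤ L * ((1 + C₃) * dist x y) := mul_le_mul_of_nonneg_left hplane.2 hL0.le
      _ = (L * (1 + (L + 1) * M)) * dist x y := by rw [hC₃def]; ring
  · -- no root substitution: F agrees with the displacement points
    have hword : ∀ i' : ℕ → Fin (M ^ d), F i' ∈ cube d M lab ([i' 0]) ∧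
        ∀ (k : Fin d) (l : ℤ),
          dist (F i') (PiInf d M lab i') ≤ C₃ * |PiInf d M lab i' k - (l:ℝ)/M| ∧
          dist (F i') (PiInf d M lab i') ≤ C₃ * |F i' k - (l:ℝ)/M| := by
      intro i'
      obtain ⟨z, hFz, hz0, hbnd⟩ := word_disp hM hlab he hg hL hF i'
        (fun hB' => absurd hB' hB)
      rw [if_neg hB, hQ_nil] at hFz
      rw [hFz]
      exact ⟨hz0, hbnd⟩
    obtain ⟨hzi0, hbi⟩ := hword i
    obtain ⟨hzj0, hbj⟩ := hword j
    have hplane := planeP hM hlab hC₃ hij hxmem hzi0 hymem hzj0 hbi hbj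
    have hCC : (1 + C₃) ≤ L * (1 + (L + 1) * M) := by
      have h1 : (0:ℝ) ≤ (L - 1) * (1 + (L + 1) * M) := by
        apply mul_nonneg (by linarith)
        have := mul_nonneg (show (0:ℝ) ≤ L + 1 by linarith) hMp.le
        linarith
      rw [hC₃def]
      nlinarith
    constructor
    · calc dist x y ≤ (1 + C₃) * dist (F i) (F j) := hplane.1
      _ ≤ (L * (1 + (L + 1) * M)) * dist (F i) (F j) :=
          mul_le_mul_of_nonneg_right hCC dist_nonneg
    · calc dist (F i) (F j) ≤ (1 + C₃) * dist x y := hplane.2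
      _ ≤ (L * (1 + (L + 1) * M)) * dist x y :=
          mul_le_mul_of_nonneg_right hCC dist_nonneg

end AuxCrux

section AuxConj

variable {d M K : ℕ} {lab : Fin (M ^ d) → Fin d → Fin M} {Ω : Type*}
  {X : List (Fin (M ^ d)) → Ω → Bool} {ω : Ω} {e : List (Fin (M ^ d))}
  {L : ℝ} {g : (Fin d → ℝ) → (Fin d → ℝ)} {F : (ℕ → Fin (M ^ d)) → (Fin d → ℝ)}
  {w : List (Fin (M ^ d))}

lemma bdryDead_shift (hw : Alive d M X ω w) (u : List (Fin (M ^ d))) :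
    BdryDead d M X ω (w ++ u) ↔ BdryDead d M (fun v ω' => X (w ++ v) ω') ω u := by
  unfold BdryDead
  constructor <;> intro h jj hjj
  · intro hcon
    exact h jj hjj ((List.append_assoc w u ([jj])) ▸ (alive_append hw (u ++ [jj])).mpr hcon)
  · intro hcon
    exact h jj hjj ((alive_append hw (u ++ [jj])).mp ((List.append_assoc w u ([jj])) ▸ hcon))

lemma substAux_shift (hw : Alive d M X ω w) :
    ∀ (u pfx : List (Fin (M ^ d))),
      substAux d M X e ω (w ++ pfx) u = substAux d M (fun v ω' => X (w ++ v) ω') e ω pfx u := by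
  intro u
  induction u with
  | nil => intro pfx; rfl
  | cons a r ih =>
      intro pfx
      rw [substAux_cons, substAux_cons]
      have hcond := bdryDead_shift hw pfx
      have htail : substAux d M X e ω (w ++ pfx ++ [a]) r =
          substAux d M (fun v ω' => X (w ++ v) ω') e ω (pfx ++ [a]) r := by
        rw [List.append_assoc]
        exact ih (pfx ++ [a])
      by_cases hc : BdryDead d M (fun v ω' => X (w ++ v) ω') ω pfx
      · rw [if_pos hc, if_pos (hcond.mpr hc), htail]
      · rw [if_neg hc, if_neg (fun hcon => hc (hcond.mp hcon)), htail]

lemma substW_shift (hw : Alive d M X ω w) (u : List (Fin (M ^ d))) :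
    substW d M X e ω (w ++ u) =
      substW d M X e ω w ++ substW d M (fun v ω' => X (w ++ v) ω') e ω u := by
  rw [substW_append]
  congr 1
  have := substAux_shift (e := e) hw u ([])
  rwa [List.append_nil] at this

lemma extendW_wordTake (i' : ℕ → Fin (M ^ d)) :
    wordTake d M (extendW d M w i') w.length = w := by
  apply List.ext_getElem
  · rw [wordTake_length]
  · intro s hs hs'
    have hsl : s < w.length := hs'
    simp only [wordTake, List.getElem_ofFn]
    unfold extendW
    simp only [hsl, dif_pos]
    rfl

lemma extendW_shift (i' : ℕ → Fin (M ^ d)) :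
    shiftW d M w.length (extendW d M w i') = i' := by
  funext t
  unfold shiftW extendW
  have h1 : ¬ (w.length + t < w.length) := by omega
  simp only [h1, dif_neg, not_false_iff]
  congr 1
  omega

lemma extendW_wordTake_add (i' : ℕ → Fin (M ^ d)) (t : ℕ) :
    wordTake d M (extendW d M w i') (w.length + t) = w ++ wordTake d M i' t := by
  rw [wordTake_add, extendW_wordTake, extendW_shift]

lemma extendW_shift_add (i' : ℕ → Fin (M ^ d)) (n' : ℕ) :
    shiftW d M (w.length + n') (extendW d M w i') = shiftW d M n' i' := by
  rw [← shiftW_shiftW, extendW_shift]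

lemma extendW_of_take {i : ℕ → Fin (M ^ d)} {m : ℕ} (h : wordTake d M i m = w) :
    extendW d M w (shiftW d M m i) = i := by
  subst h
  funext t
  unfold extendW
  by_cases ht : t < (wordTake d M i m).length
  · simp only [ht, dif_pos]
    unfold wordTake
    rw [List.get_ofFn]
    rfl
  · simp only [ht, dif_neg, not_false_iff]
    unfold shiftW
    rw [wordTake_length] at ht ⊢
    congr 1
    omega

lemma tinf_extend (hw : Alive d M X ω w) {i' : ℕ → Fin (M ^ d)}
    (hT' : TInf d M (fun v ω' => X (w ++ v) ω') ω i') :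
    TInf d M X ω (extendW d M w i') := by
  intro t
  rcases le_or_gt t w.length with h | h
  · apply alive_of_prefix (wordTake_prefix _ h)
    rw [extendW_wordTake]
    exact hw
  · have ht : t = w.length + (t - w.length) := by omega
    rw [ht, extendW_wordTake_add]
    exact (alive_append hw _).mpr (hT' _)

lemma piTilde_extend (hM : 3 ≤ M) (hw : Alive d M X ω w) (i' : ℕ → Fin (M ^ d)) :
    PiTilde d M lab X e ω (extendW d M w i') =
      hQ d M lab (substW d M X e ω w)
        (PiTilde d M lab (fun v ω' => X (w ++ v) ω') e ω i') := by
  funext k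
  have hWchain := subst_take_chain (X := X) (e := e) (ω := ω) (extendW d M w i')
  have hW'chain := subst_take_chain (X := fun v ω' => X (w ++ v) ω') (e := e) (ω := ω) i'
  have hWW' : ∀ t, substW d M X e ω (wordTake d M (extendW d M w i') (w.length + t)) =
      substW d M X e ω w ++ substW d M (fun v ω' => X (w ++ v) ω') e ω (wordTake d M i' t) := by
    intro t
    rw [extendW_wordTake_add, substW_shift hw]
  exact ciSup_corner_factor hM hWchain hW'chain w.length hWW' k

/-- Conjugation of the extension-map specification by the homothety of a surviving cube. -/
lemma extmap_conj (hM : 3 ≤ M) (hF : ExtMapSpec d M lab X e g ω F)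
    (hw : Alive d M X ω w) :
    ExtMapSpec d M lab (fun v ω' => X (w ++ v) ω') e g ω
      (fun i' => hQinv d M lab (substW d M X e ω w) (F (extendW d M w i'))) := by
  constructor
  · intro i' hT'
    dsimp only
    rw [hF.1 _ (tinf_extend hw hT'), piTilde_extend hM hw, hQinv_hQ hM]
  · intro i' n' h1' h2'
    dsimp only
    have hAl : Alive d M X ω (wordTake d M (extendW d M w i') (w.length + n')) := by
      rw [extendW_wordTake_add]
      exact (alive_append hw _).mpr h1'
    have hnAl : ¬ Alive d M X ω (wordTake d M (extendW d M w i') (w.length + n' + 1)) := by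
      rw [show w.length + n' + 1 = w.length + (n' + 1) from rfl, extendW_wordTake_add]
      intro hcon
      exact h2' ((alive_append hw _).mp hcon)
    have hspec := hF.2 (extendW d M w i') (w.length + n') hAl hnAl
    have hsubrw : substW d M X e ω (wordTake d M (extendW d M w i') (w.length + n')) =
        substW d M X e ω w ++ substW d M (fun v ω' => X (w ++ v) ω') e ω (wordTake d M i' n') := by
      rw [extendW_wordTake_add, substW_shift hw]
    have hcond : ∀ jj : Fin (M ^ d),
        (Alive d M X ω (wordTake d M (extendW d M w i') (w.length + n') ++ [jj]) ↔
          Alive d M (fun v ω' => X (w ++ v) ω') ω (wordTake d M i' n' ++ [jj])) := by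
      intro jj
      rw [extendW_wordTake_add, List.append_assoc]
      exact alive_append hw _
    constructor
    · intro hEx
      obtain ⟨jj, hjj, hjalive⟩ := hEx
      have := hspec.1 ⟨jj, hjj, (hcond jj).mpr hjalive⟩
      rw [this, hsubrw, hQ_append hM, hQinv_hQ hM, extendW_shift_add]
    · intro hAll
      have := hspec.2 (fun jj hjj hcon => hAll jj hjj ((hcond jj).mp hcon))
      rw [this, hsubrw, hQ_append hM, hQinv_hQ hM, extendW_shift_add]

end AuxConj

theorem statement13
    (d M : ℕ) (hd : 1 ≤ d) (hM : 3 ≤ M)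
    (lab : Fin (M ^ d) → Fin d → Fin M) (hlab : LabSpec d M lab)
    (K : ℕ) (e : List (Fin (M ^ d))) (he : EtaSpec d M K e) :
    ∀ L : ℝ, 1 ≤ L → ∃ C : ℝ, 1 ≤ C ∧
      ∀ (Ω : Type*) (X : List (Fin (M ^ d)) → Ω → Bool) (ω : Ω)
        (g : (Fin d → ℝ) → (Fin d → ℝ)), GSpec d M K lab e L g →
        ∀ F : (ℕ → Fin (M ^ d)) → (Fin d → ℝ), ExtMapSpec d M lab X e g ω F →
        ∀ (i j : ℕ → Fin (M ^ d)) (m : ℕ),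
          wordTake d M i m = wordTake d M j m → i m ≠ j m →
          ∀ n : ℕ, n ≤ m → Alive d M X ω (wordTake d M i n) →
            (∀ n' : ℕ, n < n' → n' ≤ m → ¬ Alive d M X ω (wordTake d M i n')) →
            C⁻¹ * ((M : ℝ) ^ ((n : ℤ) - ((substW d M X e ω (wordTake d M i n)).length : ℤ)) *
                  dist (PiInf d M lab i) (PiInf d M lab j)) ≤ dist (F i) (F j) ∧
              dist (F i) (F j) ≤ C * ((M : ℝ) ^ ((n : ℤ) - ((substW d M X e ω (wordTake d M i n)).length : ℤ)) *
                  dist (PiInf d M lab i) (PiInf d M lab j)) ∧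
              ((M : ℝ) ^ ((substW d M X e ω (wordTake d M i n)).length))⁻¹ *
                  dist (PiInf d M lab (shiftW d M n i)) (PiInf d M lab (shiftW d M n j)) =
                (M : ℝ) ^ ((n : ℤ) - ((substW d M X e ω (wordTake d M i n)).length : ℤ)) *
                  dist (PiInf d M lab i) (PiInf d M lab j) := by
  classical
  intro L hL
  have hMp := Mr_pos hM
  have hMR : (3:ℝ) ≤ (M:ℝ) := by exact_mod_cast hM
  set C := L * (1 + (L + 1) * (M:ℝ)) with hCdef
  have hA : (6:ℝ) ≤ (L + 1) * (M:ℝ) :=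
    le_trans (by norm_num) (mul_le_mul (show (2:ℝ) ≤ L + 1 by linarith) hMR
      (by norm_num) (by linarith))
  have hC7 : (1:ℝ) * 7 ≤ L * (1 + (L + 1) * (M:ℝ)) :=
    mul_le_mul hL (by linarith) (by norm_num) (by linarith)
  have hC1 : 1 ≤ C := by rw [hCdef]; linarith
  have hC0 : (0:ℝ) < C := by linarith
  have hCL : L ≤ C := by
    have h2 := mul_le_mul_of_nonneg_left (show (1:ℝ) ≤ 1 + (L + 1) * (M:ℝ) by linarith)
      (show (0:ℝ) ≤ L by linarith)
    rw [hCdef]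
    linarith
  have hL0 : (0:ℝ) < L := by linarith
  refine ⟨C, hC1, ?_⟩
  intro Ω X ω g hg F hF i j m hm hij n hnm hAl hdead
  set w := wordTake d M i n with hwdef
  set vt := substW d M X e ω w with hvtdef
  have hpw : (0:ℝ) < (M:ℝ) ^ vt.length := by positivity
  have hpn : (0:ℝ) < (M:ℝ) ^ n := by positivity
  have hTakeEq : wordTake d M i n = wordTake d M j n := wordTake_eq_of_le hm hnm
  have hwj : wordTake d M j n = w := hTakeEq.symm
  have hdistshift := dist_PiInf_shift (lab := lab) hM hTakeEq
  have hzpow : (M : ℝ) ^ ((n : ℤ) - (vt.length : ℤ)) = (M:ℝ)^n * ((M:ℝ)^vt.length)⁻¹ := by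
    rw [zpow_sub₀ (ne_of_gt hMp), zpow_natCast, zpow_natCast, div_eq_mul_inv]
  have hpart3 : ((M : ℝ) ^ vt.length)⁻¹ *
      dist (PiInf d M lab (shiftW d M n i)) (PiInf d M lab (shiftW d M n j)) =
      (M : ℝ) ^ ((n : ℤ) - (vt.length : ℤ)) * dist (PiInf d M lab i) (PiInf d M lab j) := by
    rw [hdistshift, hzpow]
    field_simp
  suffices hmain : C⁻¹ * ((M : ℝ) ^ ((n : ℤ) - (vt.length : ℤ)) *
        dist (PiInf d M lab i) (PiInf d M lab j)) ≤ dist (F i) (F j) ∧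
      dist (F i) (F j) ≤ C * ((M : ℝ) ^ ((n : ℤ) - (vt.length : ℤ)) *
        dist (PiInf d M lab i) (PiInf d M lab j)) by
    exact ⟨hmain.1, hmain.2, hpart3⟩
  set a := PiInf d M lab (shiftW d M n i) with hadef
  set b := PiInf d M lab (shiftW d M n j) with hbdef
  have hTval : (M : ℝ) ^ ((n : ℤ) - (vt.length : ℤ)) *
      dist (PiInf d M lab i) (PiInf d M lab j) = ((M : ℝ) ^ vt.length)⁻¹ * dist a b :=
    hpart3.symm
  rw [hTval]
  have hamem : a ∈ cube d M lab ([] : List (Fin (M ^ d))) := PiInf_mem_unit hM _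
  have hbmem : b ∈ cube d M lab ([] : List (Fin (M ^ d))) := PiInf_mem_unit hM _
  rcases Nat.lt_or_ge n m with hlt | hge
  · -- the common prefix dies before the words split
    have hnAl1 : ¬ Alive d M X ω (wordTake d M i (n + 1)) := hdead (n + 1) (by omega) (by omega)
    have hwj1 : wordTake d M j (n + 1) = wordTake d M i (n + 1) :=
      (wordTake_eq_of_le hm (by omega)).symm
    have hAlj : Alive d M X ω (wordTake d M j n) := by rw [hwj]; exact hAl
    have hnAlj : ¬ Alive d M X ω (wordTake d M j (n + 1)) := by rw [hwj1]; exact hnAl1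
    have hspec_i := hF.2 i n hAl hnAl1
    have hspec_j := hF.2 j n hAlj hnAlj
    by_cases hEx : ∃ jj ∈ LamB d M, Alive d M X ω (w ++ [jj])
    · have hFi := hspec_i.1 hEx
      have hFj := hspec_j.1 (by rw [hwj]; exact hEx)
      have hDeq : dist (F i) (F j) = ((M : ℝ) ^ vt.length)⁻¹ * dist a b := by
        rw [hFi, hFj, hwj, ← hwdef, ← hvtdef, dist_hQ hM]
      rw [hDeq]
      have hT0 : 0 ≤ ((M : ℝ) ^ vt.length)⁻¹ * dist a b := by positivity
      constructor
      · have hCinv : C⁻¹ ≤ 1 := inv_le_one_of_one_le₀ hC1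
        nlinarith
      · nlinarith
    · push_neg at hEx
      have hFi := hspec_i.2 hEx
      have hFj := hspec_j.2 (by rw [hwj]; exact hEx)
      have hDeq : dist (F i) (F j) = ((M : ℝ) ^ vt.length)⁻¹ * dist (g a) (g b) := by
        rw [hFi, hFj, hwj, ← hwdef, ← hvtdef, dist_hQ hM]
      rw [hDeq]
      have hbil := hg.2.1 a hamem b hbmem
      have hinvC : C⁻¹ ≤ L⁻¹ := by
        apply inv_anti₀ hL0 hCL
      constructor
      · calc C⁻¹ * (((M : ℝ) ^ vt.length)⁻¹ * dist a b)
            ≤ L⁻¹ * (((M : ℝ) ^ vt.length)⁻¹ * dist a b) := by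
              apply mul_le_mul_of_nonneg_right hinvC (by positivity)
        _ = ((M : ℝ) ^ vt.length)⁻¹ * (L⁻¹ * dist a b) := by ring
        _ ≤ ((M : ℝ) ^ vt.length)⁻¹ * dist (g a) (g b) :=
            mul_le_mul_of_nonneg_left hbil.1 (by positivity)
      · calc ((M : ℝ) ^ vt.length)⁻¹ * dist (g a) (g b)
            ≤ ((M : ℝ) ^ vt.length)⁻¹ * (L * dist a b) :=
              mul_le_mul_of_nonneg_left hbil.2 (by positivity)
        _ = L * (((M : ℝ) ^ vt.length)⁻¹ * dist a b) := by ring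
        _ ≤ C * (((M : ℝ) ^ vt.length)⁻¹ * dist a b) :=
            mul_le_mul_of_nonneg_right hCL (by positivity)
  · -- n = m : conjugate by the homothety of the surviving cube and use the crux lemma
    have hnm' : n = m := by omega
    subst hnm'
    have hF' : ExtMapSpec d M lab (fun v ω' => X (w ++ v) ω') e g ω
        (fun i' => hQinv d M lab vt (F (extendW d M w i'))) := extmap_conj hM hF hAl
    have hij' : shiftW d M n i 0 ≠ shiftW d M n j 0 := by
      show i (n + 0) ≠ j (n + 0)
      simpa using hij
    have hcrux := crux hM hlab he hg hL hF' hij'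
    have hexti : extendW d M w (shiftW d M n i) = i := extendW_of_take rfl
    have hextj : extendW d M w (shiftW d M n j) = j := extendW_of_take hwj
    have hFi : F i = hQ d M lab vt
        ((fun i' => hQinv d M lab vt (F (extendW d M w i'))) (shiftW d M n i)) := by
      dsimp only
      rw [hexti, hQ_hQinv hM]
    have hFj : F j = hQ d M lab vt
        ((fun i' => hQinv d M lab vt (F (extendW d M w i'))) (shiftW d M n j)) := by
      dsimp only
      rw [hextj, hQ_hQinv hM]
    set Fi' := (fun i' => hQinv d M lab vt (F (extendW d M w i'))) (shiftW d M n i) with hFi'def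
    set Fj' := (fun i' => hQinv d M lab vt (F (extendW d M w i'))) (shiftW d M n j) with hFj'def
    have hDeq : dist (F i) (F j) = ((M : ℝ) ^ vt.length)⁻¹ * dist Fi' Fj' := by
      rw [hFi, hFj, dist_hQ hM]
    rw [hDeq]
    rw [← hadef, ← hbdef] at hcrux
    constructor
    · have h1 : C⁻¹ * dist a b ≤ dist Fi' Fj' := by
        rw [inv_mul_le_iff₀ hC0]
        exact hcrux.1
      calc C⁻¹ * (((M : ℝ) ^ vt.length)⁻¹ * dist a b)
          = ((M : ℝ) ^ vt.length)⁻¹ * (C⁻¹ * dist a b) := by ring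
      _ ≤ ((M : ℝ) ^ vt.length)⁻¹ * dist Fi' Fj' :=
          mul_le_mul_of_nonneg_left h1 (by positivity)
    · calc ((M : ℝ) ^ vt.length)⁻¹ * dist Fi' Fj'
          ≤ ((M : ℝ) ^ vt.length)⁻¹ * (C * dist a b) :=
            mul_le_mul_of_nonneg_left hcrux.2 (by positivity)
      _ = C * (((M : ℝ) ^ vt.length)⁻¹ * dist a b) := by ring

end FractalPercolation
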